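/- arXiv:1807.02432 — 6 statements merged into one kernel-verified Lean document; each statement's English description precedes it below -/
import Mathlib

section
/- If a signed graph G satisfies conditions (I) and (II), then the underlying simple graph G̃⁺ = G⁺∪G⁻ is chordal. -/
open scoped Classical

universe u v

/-! ## Signed graphs -/

/-- A signed graph: a pair of simple graphs (positive and negative parts) on a common
vertex set. -/
structure SignedGraph (V : Type u) where
  pos : SimpleGraph V
  neg : SimpleGraph V

namespace SignedGraph

variable {V : Type u}

/-- Adjacency by an edge of a given sign (`true` = negative edge, `false` = positive edge). -/
def EdgeAdj (G : SignedGraph V) (s : Bool) (u v : V) : Prop :=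
  cond s (G.neg.Adj u v) (G.pos.Adj u v)

/-- A cycle of a signed graph: distinct vertices `vert 0, …, vert (n-1)` (`n ≥ 3`) with an
edge of sign `sgn i` between `vert i` and `vert ((i+1) % n)` for each `i < n`. -/
structure Cycle (G : SignedGraph V) where
  n : ℕ
  three_le : 3 ≤ n
  vert : ℕ → V
  inj : ∀ i j, i < n → j < n → vert i = vert j → i = j
  sgn : ℕ → Bool
  adj : ∀ i, i < n → G.EdgeAdj (sgn i) (vert i) (vert ((i + 1) % n))

/-- A cycle is balanced if it uses an even number of negative edges. -/
def Cycle.Balanced {G : SignedGraph V} (C : G.Cycle) : Prop :=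
  Even (((Finset.range C.n).filter fun i => C.sgn i = true).card)

/-- A chord of a cycle: an edge of `G` joining two non-consecutive vertices of the cycle. -/
def Cycle.IsChord {G : SignedGraph V} (C : G.Cycle) (i j : ℕ) : Prop :=
  i < C.n ∧ j < C.n ∧ i ≠ j ∧ j ≠ (i + 1) % C.n ∧ i ≠ (j + 1) % C.n ∧
    (G.pos.Adj (C.vert i) (C.vert j) ∨ G.neg.Adj (C.vert i) (C.vert j))

/-- The chord of sign `s` between positions `i < j` of the cycle `C` separates `C` into two
balanced cycles (for a balanced cycle it suffices that one of the two pieces is balanced). -/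
def Cycle.BalancedChordAt {G : SignedGraph V} (C : G.Cycle) (i j : ℕ) (s : Bool) : Prop :=
  i < j ∧ C.IsChord i j ∧ G.EdgeAdj s (C.vert i) (C.vert j) ∧
    Even ((((Finset.Ico i j).filter fun k => C.sgn k = true).card) + cond s 1 0) ∧
    Even ((((Finset.range C.n \ Finset.Ico i j).filter fun k => C.sgn k = true).card)
      + cond s 1 0)

/-- The cycle has a balanced chord. -/
def Cycle.HasBalancedChord {G : SignedGraph V} (C : G.Cycle) : Prop :=
  ∃ i j s, C.BalancedChordAt i j s

/-- Condition (I): a signed graph is balanced chordal if every balanced cycle of length at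
least four has a balanced chord. -/
def BalancedChordal (G : SignedGraph V) : Prop :=
  ∀ C : G.Cycle, 4 ≤ C.n → C.Balanced → C.HasBalancedChord

/-- The cycle `C` is an induced subgraph of `G`: the only edges of `G` among its vertices are
the edges of the cycle, each single, with the sign it has in the cycle. -/
def Cycle.IsInduced {G : SignedGraph V} (C : G.Cycle) : Prop :=
  ∀ i j, i < C.n → j < C.n → ∀ s : Bool,
    (G.EdgeAdj s (C.vert i) (C.vert j) ↔
      ((j = (i + 1) % C.n ∧ C.sgn i = s) ∨ (i = (j + 1) % C.n ∧ C.sgn j = s)))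

/-- Condition (II): no induced subgraph of `G` is an unbalanced cycle (of length `≥ 3`). -/
def NoInducedUnbalancedCycle (G : SignedGraph V) : Prop :=
  ¬ ∃ C : G.Cycle, C.IsInduced ∧ ¬ C.Balanced

/-- Switching a signed graph by `ν : V → Bool`. -/
def switch (G : SignedGraph V) (ν : V → Bool) : SignedGraph V where
  pos := SimpleGraph.fromRel fun u w => if ν u = ν w then G.pos.Adj u w else G.neg.Adj u w
  neg := SimpleGraph.fromRel fun u w => if ν u = ν w then G.neg.Adj u w else G.pos.Adj u w

/-- `G` contains an induced copy of the signed graph `H`. -/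
def HasInducedCopy {W : Type v} (G : SignedGraph V) (H : SignedGraph W) : Prop :=
  ∃ f : W → V, Function.Injective f ∧
    (∀ a b : W, G.pos.Adj (f a) (f b) ↔ H.pos.Adj a b) ∧
    (∀ a b : W, G.neg.Adj (f a) (f b) ↔ H.neg.Adj a b)

end SignedGraph

/-- The obstruction graph `G₀` of Figure 1: vertices `0,1,2,3` (= `1,2,3,4` in the paper),
double edges `{0,1}, {2,3}`, positive single edges `{0,3}, {1,3}, {1,2}`, negative single
edge `{0,2}`. -/
def obstruction : SignedGraph (Fin 4) where
  pos := SimpleGraph.fromRel fun a b =>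
    (a = 0 ∧ b = 1) ∨ (a = 2 ∧ b = 3) ∨ (a = 0 ∧ b = 3) ∨ (a = 1 ∧ b = 3) ∨ (a = 1 ∧ b = 2)
  neg := SimpleGraph.fromRel fun a b =>
    (a = 0 ∧ b = 1) ∨ (a = 2 ∧ b = 3) ∨ (a = 0 ∧ b = 2)

namespace SignedGraph

variable {V : Type u}

/-- Condition (III): no induced subgraph of `G` is switching equivalent to the obstruction
graph `G₀`. -/
def NoInducedObstruction (G : SignedGraph V) : Prop :=
  ¬ ∃ ν : Fin 4 → Bool, G.HasInducedCopy (obstruction.switch ν)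

/-- The signed graph `G̃ = (G⁺ ∪ G⁻, G⁺ ∩ G⁻)`. -/
def tilde (G : SignedGraph V) : SignedGraph V :=
  ⟨G.pos ⊔ G.neg, G.pos ⊓ G.neg⟩

/-- The induced subgraph of a signed graph on a set of vertices. -/
def induce (G : SignedGraph V) (W : Set V) : SignedGraph W :=
  ⟨SimpleGraph.induce W G.pos, SimpleGraph.induce W G.neg⟩

/-- A vertex `v` is link simplicial: for any two edges at `v` with distinct other endpoints
there is an edge making a balanced triangle with them. -/
def LinkSimplicial (G : SignedGraph V) (v : V) : Prop :=
  ∀ (u u' : V) (s s' : Bool), u ≠ u' → G.EdgeAdj s v u → G.EdgeAdj s' v u' →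
    ∃ s'' : Bool, G.EdgeAdj s'' u u' ∧
      Even ((cond s 1 0 + cond s' 1 0 + cond s'' 1 0 : ℕ))

/-- A link elimination ordering: an enumeration of the vertices such that each vertex is
link simplicial in the induced subgraph on it and its predecessors. -/
def HasLinkElimOrdering (G : SignedGraph V) [Fintype V] : Prop :=
  ∃ e : Fin (Fintype.card V) ≃ V, ∀ i : Fin (Fintype.card V),
    (G.induce {w : V | ∃ j, j ≤ i ∧ e j = w}).LinkSimplicial ⟨e i, ⟨i, le_refl i, rfl⟩⟩

/-- A complete signed graph `K±`: any two distinct vertices are joined by a double edge. -/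
def IsCompleteSigned (G : SignedGraph V) : Prop :=
  ∀ u v : V, u ≠ v → G.pos.Adj u v ∧ G.neg.Adj u v

end SignedGraph

/-- A threshold graph: it can be built from the one-vertex graph (more generally from the
empty graph) by successively adding isolated or dominating vertices; equivalently there is
an ordering of the vertices in which each vertex is isolated or dominating among its
predecessors. -/
def SimpleGraph.IsThresholdGraph {V : Type u} [Fintype V] (G : SimpleGraph V) : Prop :=
  ∃ e : Fin (Fintype.card V) ≃ V, ∀ i : Fin (Fintype.card V),
    (∀ j, j < i → ¬ G.Adj (e i) (e j)) ∨ (∀ j, j < i → G.Adj (e i) (e j))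

/-- A simple graph is chordal if every cycle of length at least four has a chord. -/
def SimpleGraph.IsChordalGraph {V : Type u} (G : SimpleGraph V) : Prop :=
  ∀ n : ℕ, 4 ≤ n → ∀ v : ℕ → V,
    (∀ i j, i < n → j < n → v i = v j → i = j) →
    (∀ i, i < n → G.Adj (v i) (v ((i + 1) % n))) →
    ∃ i j, i < j ∧ j < n ∧ j ≠ i + 1 ∧ ¬(i = 0 ∧ j = n - 1) ∧ G.Adj (v i) (v j)

/-! ## Hyperplane arrangements -/

noncomputable section Arrangements

/-- The signed-graphic arrangement `A(G)` in `K^V`, given by its defining linear forms: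
`x i` for each vertex, `x i - x j` for positive edges and `x i + x j` for negative edges. -/
def signedArr (K : Type u) [Field K] {V : Type v} [Fintype V] (G : SignedGraph V) :
    Finset ((V → K) →ₗ[K] K) :=
  (Finset.univ.image fun i : V => LinearMap.proj i)
    ∪ ((Finset.univ.filter fun p : V × V => G.pos.Adj p.1 p.2).image fun p =>
        (LinearMap.proj p.1 : (V → K) →ₗ[K] K) - LinearMap.proj p.2)
    ∪ ((Finset.univ.filter fun p : V × V => G.neg.Adj p.1 p.2).image fun p =>
        (LinearMap.proj p.1 : (V → K) →ₗ[K] K) + LinearMap.proj p.2)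

/-- The linear polynomial in `K[x_i : i ∈ V]` corresponding to a linear form on `K^V`. -/
def linToPoly (K : Type u) [Field K] {V : Type v} [Fintype V] (φ : (V → K) →ₗ[K] K) :
    MvPolynomial V K :=
  ∑ i : V, MvPolynomial.C (φ (Pi.single i 1)) * MvPolynomial.X i

/-- The module `D(A)` of logarithmic derivations of an arrangement given by linear forms. -/
def logDerModule (K : Type u) [Field K] {V : Type v} [Fintype V]
    (A : Finset ((V → K) →ₗ[K] K)) :
    Submodule (MvPolynomial V K) (Derivation K (MvPolynomial V K) (MvPolynomial V K)) where
  carrier := {θ | ∀ φ ∈ A, θ (linToPoly K φ) ∈ Ideal.span {linToPoly K φ}}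
  add_mem' := by
    intro θ η hθ hη φ hφ
    simpa using Ideal.add_mem _ (hθ φ hφ) (hη φ hφ)
  zero_mem' := by
    intro φ hφ
    simp
  smul_mem' := by
    intro c θ hθ φ hφ
    simpa [smul_eq_mul] using Ideal.mul_mem_left _ c (hθ φ hφ)

/-- An arrangement is free if its module of logarithmic derivations is free. -/
def ArrIsFree (K : Type u) [Field K] {V : Type v} [Fintype V]
    (A : Finset ((V → K) →ₗ[K] K)) : Prop :=
  Module.Free (MvPolynomial V K) (logDerModule K A)

/-- The intersection lattice: all intersections of subfamilies of a finite family of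
subspaces (the empty intersection being the whole space). -/
def interLattice (K : Type u) [Field K] {M : Type v} [AddCommGroup M] [Module K M]
    (H : Finset (Submodule K M)) : Finset (Submodule K M) :=
  H.powerset.image fun B => B.inf id

/-- The one-variable Möbius function of the intersection lattice `L` (ordered by reverse
inclusion): `μ(whole space) = 1` and `μ(X) = -∑_{Y < X} μ(Y)`. -/
def mobiusFn (K : Type u) [Field K] {M : Type v} [AddCommGroup M] [Module K M]
    [FiniteDimensional K M] (L : Finset (Submodule K M)) (X : Submodule K M) : ℤ :=
  if X = ⊤ then 1
  else - ∑ Y ∈ (L.filter fun Y => X < Y).attach, mobiusFn K L Y.1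
termination_by Module.finrank K M - Module.finrank K X
decreasing_by
  have h1 : X < Y.1 := (Finset.mem_filter.mp Y.2).2
  have h2 : Module.finrank K X < Module.finrank K Y.1 :=
    Submodule.finrank_lt_finrank_of_lt h1
  have h3 : Module.finrank K (Y.1 : Submodule K M) ≤ Module.finrank K M :=
    Submodule.finrank_le Y.1
  omega

/-- The characteristic polynomial `χ(A,t) = ∑_{X ∈ L(A)} μ(X) t^{dim X}` of an arrangement
given by its defining linear forms. -/
def arrCharPoly (K : Type u) [Field K] {M : Type v} [AddCommGroup M] [Module K M]
    [FiniteDimensional K M] (A : Finset (M →ₗ[K] K)) : Polynomial ℤ :=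
  ∑ X ∈ interLattice K (A.image LinearMap.ker),
    Polynomial.C (mobiusFn K (interLattice K (A.image LinearMap.ker)) X) *
      Polynomial.X ^ Module.finrank K X

/-- The restriction `A^H` of the arrangement `A` to the hyperplane `H = ker φ`, given by
the restrictions of the defining forms of the hyperplanes other than `H`. -/
def restrArr (K : Type u) [Field K] {M : Type v} [AddCommGroup M] [Module K M]
    (A : Finset (M →ₗ[K] K)) (φ : M →ₗ[K] K) : Finset (↥(LinearMap.ker φ) →ₗ[K] K) :=
  (A.filter fun ψ => LinearMap.ker ψ ≠ LinearMap.ker φ).image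
    fun ψ => ψ ∘ₗ (LinearMap.ker φ).subtype

/-- Auxiliary fuelled definition of divisional freeness. -/
def DivFreeAux (K : Type u) [Field K] (n : ℕ) (M : Type v) [AddCommGroup M] [Module K M]
    [FiniteDimensional K M] (A : Finset (M →ₗ[K] K)) : Prop :=
  match n with
  | 0 => A = ∅
  | Nat.succ m => A = ∅ ∨ ∃ φ ∈ A, φ ≠ 0 ∧
      DivFreeAux K m ↥(LinearMap.ker φ) (restrArr K A φ) ∧
      arrCharPoly K (restrArr K A φ) ∣ arrCharPoly K A

/-- Divisional freeness: the empty arrangement is divisionally free, and `A` is divisionally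
free if some hyperplane `H ∈ A` has `A^H` divisionally free with `χ(A^H,t) ∣ χ(A,t)`.
(Each restriction drops the dimension by exactly one, so `finrank M` steps suffice.) -/
def ArrIsDivFree (K : Type u) [Field K] {M : Type v} [AddCommGroup M] [Module K M]
    [FiniteDimensional K M] (A : Finset (M →ₗ[K] K)) : Prop :=
  DivFreeAux K (Module.finrank K M) M A

/-- The meet of two elements in the intersection lattice ordered by reverse inclusion:
the smallest member of `L` containing both. -/
def latticeMeet (K : Type u) [Field K] {M : Type v} [AddCommGroup M] [Module K M]
    (L : Finset (Submodule K M)) (x y : Submodule K M) : Submodule K M :=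
  (L.filter fun z => x ≤ z ∧ y ≤ z).inf id

/-- `m` is a modular element of the intersection lattice `L` (ordered by reverse
inclusion): for all `a ≤ b` in `L`, `a ∨ (m ∧ b) = (a ∨ m) ∧ b`. -/
def ModularIn (K : Type u) [Field K] {M : Type v} [AddCommGroup M] [Module K M]
    (L : Finset (Submodule K M)) (m : Submodule K M) : Prop :=
  m ∈ L ∧ ∀ a ∈ L, ∀ b ∈ L, b ≤ a →
    a ⊓ latticeMeet K L m b = latticeMeet K L (a ⊓ m) b

/-- An arrangement is supersolvable if its intersection lattice has a maximal chain of
modular elements. -/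
def ArrSupersolvable (K : Type u) [Field K] {M : Type v} [AddCommGroup M] [Module K M]
    (A : Finset (M →ₗ[K] K)) : Prop :=
  ∃ C : Set (Submodule K M),
    C ⊆ ↑(interLattice K (A.image LinearMap.ker)) ∧
    IsChain (· ≤ ·) C ∧
    (∀ C' : Set (Submodule K M),
        C' ⊆ ↑(interLattice K (A.image LinearMap.ker)) → IsChain (· ≤ ·) C' → C ⊆ C' →
          C' = C) ∧
    ∀ m ∈ C, ModularIn K (interLattice K (A.image LinearMap.ker)) m

end Arrangements



private lemma card_filter_split (s : Finset ℕ) (i : ℕ) (hi : i ∈ s) (p : ℕ → Bool) :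
    (s.filter fun j => p j = true).card
      = ((s.erase i).filter fun j => p j = true).card + (if p i = true then 1 else 0) := by
  conv_lhs => rw [← Finset.insert_erase hi]
  rw [Finset.filter_insert]
  split_ifs with h
  · rw [Finset.card_insert_of_notMem (by simp)]
  · simp


/-- **Proposition 3.2.** If `G` satisfies conditions (I) and (II), then the underlying
simple graph `G̃⁺ = G⁺ ∪ G⁻` is chordal. -/
theorem underlying_chordal {V : Type} (G : SignedGraph V)
    (hI : G.BalancedChordal) (hII : G.NoInducedUnbalancedCycle) :
    (G.pos ⊔ G.neg).IsChordalGraph := by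
  intro n hn v hinj hadj
  have esymm : ∀ (s : Bool) (a b : V), G.EdgeAdj s a b → G.EdgeAdj s b a := by
    intro s a b h
    cases s
    · exact SimpleGraph.Adj.symm h
    · exact SimpleGraph.Adj.symm h
  have eirr : ∀ (s : Bool) (a : V), ¬ G.EdgeAdj s a a := by
    intro s a h
    cases s
    · exact G.pos.irrefl h
    · exact G.neg.irrefl h
  set sgn0 : ℕ → Bool := fun i => if G.pos.Adj (v i) (v ((i + 1) % n)) then false else true
    with hsgn0
  have hvalid0 : ∀ i, i < n → G.EdgeAdj (sgn0 i) (v i) (v ((i + 1) % n)) := by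
    intro i hi
    by_cases h : G.pos.Adj (v i) (v ((i + 1) % n))
    · simpa [SignedGraph.EdgeAdj, hsgn0, h] using h
    · have h2 := hadj i hi
      rw [SimpleGraph.sup_adj] at h2
      have : G.neg.Adj (v i) (v ((i + 1) % n)) := by tauto
      simpa [SignedGraph.EdgeAdj, hsgn0, h] using this
  have chordOf : ∀ i j : ℕ, i < n → j < n → i ≠ j → j ≠ (i + 1) % n → i ≠ (j + 1) % n →
      (G.pos.Adj (v i) (v j) ∨ G.neg.Adj (v i) (v j)) →
      ∃ a b, a < b ∧ b < n ∧ b ≠ a + 1 ∧ ¬(a = 0 ∧ b = n - 1) ∧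
        (G.pos ⊔ G.neg).Adj (v a) (v b) := by
    intro i j hi hj hne hj1 hi1 hA
    rcases lt_or_gt_of_ne hne with h | h
    · refine ⟨i, j, h, hj, ?_, ?_, by rw [SimpleGraph.sup_adj]; exact hA⟩
      · intro hji
        apply hj1
        rw [hji, Nat.mod_eq_of_lt (by omega)]
      · rintro ⟨h0, h1⟩
        apply hi1
        subst h0
        rw [h1]
        have : n - 1 + 1 = n := by omega
        rw [this, Nat.mod_self]
    · have hA' : G.pos.Adj (v j) (v i) ∨ G.neg.Adj (v j) (v i) := by
        rcases hA with h' | h'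
        · exact Or.inl h'.symm
        · exact Or.inr h'.symm
      refine ⟨j, i, h, hi, ?_, ?_, by rw [SimpleGraph.sup_adj]; exact hA'⟩
      · intro hij
        apply hi1
        rw [hij, Nat.mod_eq_of_lt (by omega)]
      · rintro ⟨h0, h1⟩
        apply hj1
        subst h0
        rw [h1]
        have : n - 1 + 1 = n := by omega
        rw [this, Nat.mod_self]
  by_cases hbal : ∃ sg : ℕ → Bool,
      (∀ i, i < n → G.EdgeAdj (sg i) (v i) (v ((i + 1) % n))) ∧
      Even (((Finset.range n).filter fun i => sg i = true).card)
  · obtain ⟨sg, hv, he⟩ := hbal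
    let C : G.Cycle := ⟨n, by omega, v, hinj, sg, hv⟩
    have hB : C.Balanced := he
    obtain ⟨i, j, s, hij, hchord, -⟩ := hI C hn hB
    obtain ⟨hi, hj, hne, hj1, hi1, hA⟩ := hchord
    exact chordOf i j hi hj hne hj1 hi1 hA
  · -- no double edges on the cycle
    have hnd : ∀ i, i < n →
        ¬ (G.pos.Adj (v i) (v ((i + 1) % n)) ∧ G.neg.Adj (v i) (v ((i + 1) % n))) := by
      rintro i hi ⟨hp, hq⟩
      apply hbal
      set k := (((Finset.range n).erase i).filter fun j => sgn0 j = true).card with hk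
      have key : ∀ b : Bool,
          (∀ j, j < n → G.EdgeAdj ((fun j => if j = i then b else sgn0 j) j)
            (v j) (v ((j + 1) % n))) ∧
          (((Finset.range n).filter fun j => (if j = i then b else sgn0 j) = true).card
            = k + (if b = true then 1 else 0)) := by
        intro b
        constructor
        · intro j hj
          by_cases hji : j = i
          · subst hji
            cases b
            · simpa [SignedGraph.EdgeAdj] using hp
            · simpa [SignedGraph.EdgeAdj] using hq
          · simpa [hji] using hvalid0 j hj
        · rw [card_filter_split (Finset.range n) i (Finset.mem_range.mpr hi)]
          congr 1
          · rw [hk]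
            apply congrArg
            apply Finset.filter_congr
            intro j hj
            have : j ≠ i := (Finset.mem_erase.mp hj).1
            simp [this]
          · simp
      by_cases hke : Even k
      · refine ⟨fun j => if j = i then false else sgn0 j, (key false).1, ?_⟩
        rw [(key false).2]
        simpa using hke
      · refine ⟨fun j => if j = i then true else sgn0 j, (key true).1, ?_⟩
        rw [(key true).2]
        simp only [if_pos rfl]
        exact Nat.even_add_one.mpr hke
    let C : G.Cycle := ⟨n, by omega, v, hinj, sgn0, hvalid0⟩
    have hunb : ¬ C.Balanced := by
      intro hB
      exact hbal ⟨sgn0, hvalid0, hB⟩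
    have hnotind : ¬ C.IsInduced := by
      intro hind
      exact hII ⟨C, hind, hunb⟩
    rw [SignedGraph.Cycle.IsInduced] at hnotind
    push_neg at hnotind
    obtain ⟨i, j, hi, hj, s, hiff⟩ := hnotind
    simp only [show C.n = n from rfl, show C.vert = v from rfl,
      show C.sgn = sgn0 from rfl] at hi hj hiff
    have hback : ((j = (i + 1) % n ∧ sgn0 i = s) ∨ (i = (j + 1) % n ∧ sgn0 j = s)) →
        G.EdgeAdj s (v i) (v j) := by
      rintro (⟨rfl, rfl⟩ | ⟨rfl, rfl⟩)
      · exact hvalid0 i hi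
      · exact esymm _ _ _ (hvalid0 j hj)
    rcases hiff with ⟨hA, hnc1, hnc2⟩ | ⟨hA, hc⟩
    swap
    · exact absurd (hback hc) hA
    have hne : i ≠ j := by
      intro h
      subst h
      exact eirr s (v i) hA
    have hj1 : j ≠ (i + 1) % n := by
      intro hji
      have hss : sgn0 i ≠ s := hnc1 hji
      have h1 := hvalid0 i hi
      rw [← hji] at h1
      apply hnd i hi
      rw [← hji]
      cases hs : s
      · rw [hs] at hA hss
        have hso : sgn0 i = true := by
          cases h : sgn0 i
          · exact absurd h hss
          · rfl
        rw [hso] at h1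
        exact ⟨by simpa [SignedGraph.EdgeAdj] using hA, by simpa [SignedGraph.EdgeAdj] using h1⟩
      · rw [hs] at hA hss
        have hso : sgn0 i = false := by
          cases h : sgn0 i
          · rfl
          · exact absurd h hss
        rw [hso] at h1
        exact ⟨by simpa [SignedGraph.EdgeAdj] using h1, by simpa [SignedGraph.EdgeAdj] using hA⟩
    have hi1 : i ≠ (j + 1) % n := by
      intro hij
      have hss : sgn0 j ≠ s := hnc2 hij
      have h1 := hvalid0 j hj
      have hA' : G.EdgeAdj s (v j) (v ((j + 1) % n)) := by
        rw [← hij]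
        exact esymm _ _ _ hA
      apply hnd j hj
      cases hs : s
      · rw [hs] at hA' hss
        have hso : sgn0 j = true := by
          cases h : sgn0 j
          · exact absurd h hss
          · rfl
        rw [hso] at h1
        exact ⟨by simpa [SignedGraph.EdgeAdj] using hA', by simpa [SignedGraph.EdgeAdj] using h1⟩
      · rw [hs] at hA' hss
        have hso : sgn0 j = false := by
          cases h : sgn0 j
          · rfl
          · exact absurd h hss
        rw [hso] at h1
        exact ⟨by simpa [SignedGraph.EdgeAdj] using h1, by simpa [SignedGraph.EdgeAdj] using hA'⟩
    apply chordOf i j hi hj hne hj1 hi1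
    cases hs : s
    · rw [hs] at hA
      exact Or.inl (by simpa [SignedGraph.EdgeAdj] using hA)
    · rw [hs] at hA
      exact Or.inr (by simpa [SignedGraph.EdgeAdj] using hA)
end

section
/- Let G be a signed graph and let G̃=(G⁺∪G⁻, G⁺∩G⁻). If a vertex v is link simplicial in G, then v is link simplicial in G̃. -/
open scoped Classical

universe u v

/-- **Proposition 3.3 (first part).** A link-simplicial vertex of `G` is link simplicial in
`G̃ = (G⁺ ∪ G⁻, G⁺ ∩ G⁻)`. -/
theorem linkSimplicial_tilde {V : Type} (G : SignedGraph V) (v : V)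
    (h : G.LinkSimplicial v) : G.tilde.LinkSimplicial v := by
  intro u u' s s' hne hu hu'
  cases s <;> cases s' <;>
    simp only [SignedGraph.EdgeAdj, SignedGraph.tilde, cond_false, cond_true,
      SimpleGraph.sup_adj, SimpleGraph.inf_adj] at hu hu' ⊢
  · -- both single
    obtain ⟨t, ht⟩ : ∃ t : Bool, G.EdgeAdj t v u := by
      rcases hu with h1 | h1
      exacts [⟨false, h1⟩, ⟨true, h1⟩]
    obtain ⟨t', ht'⟩ : ∃ t' : Bool, G.EdgeAdj t' v u' := by
      rcases hu' with h1 | h1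
      exacts [⟨false, h1⟩, ⟨true, h1⟩]
    obtain ⟨s2, h2, -⟩ := h u u' t t' hne ht ht'
    refine ⟨false, ?_, by decide⟩
    cases s2
    · exact Or.inl h2
    · exact Or.inr h2
  · -- single, double : need both edges at u u'
    obtain ⟨t, ht⟩ : ∃ t : Bool, G.EdgeAdj t v u := by
      rcases hu with h1 | h1
      exacts [⟨false, h1⟩, ⟨true, h1⟩]
    obtain ⟨s2, h2, he2⟩ := h u u' t false hne ht hu'.1
    obtain ⟨s3, h3, he3⟩ := h u u' t true hne ht hu'.2
    refine ⟨true, ?_, by decide⟩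
    have hne23 : s2 ≠ s3 := by
      intro hEq; subst hEq
      cases t <;> cases s2 <;> simp_all [Nat.even_iff]
    cases s2 <;> cases s3 <;> simp_all
    · exact ⟨h2, h3⟩
    · exact ⟨h3, h2⟩
  · -- double, single
    obtain ⟨t, ht⟩ : ∃ t : Bool, G.EdgeAdj t v u' := by
      rcases hu' with h1 | h1
      exacts [⟨false, h1⟩, ⟨true, h1⟩]
    obtain ⟨s2, h2, he2⟩ := h u u' false t hne hu.1 ht
    obtain ⟨s3, h3, he3⟩ := h u u' true t hne hu.2 ht
    refine ⟨true, ?_, by decide⟩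
    have hne23 : s2 ≠ s3 := by
      intro hEq; subst hEq
      cases t <;> cases s2 <;> simp_all [Nat.even_iff]
    cases s2 <;> cases s3 <;> simp_all
    · exact ⟨h2, h3⟩
    · exact ⟨h3, h2⟩
  · -- both double
    obtain ⟨s2, h2, he2⟩ := h u u' false false hne hu.1 hu'.1
    refine ⟨false, ?_, by decide⟩
    cases s2
    · exact Or.inl h2
    · exfalso; simp at he2
end

section
/- Let G be a signed graph with no induced subgraph isomorphic to an unbalanced triangle, and let G̃=(G⁺∪G⁻, G⁺∩G⁻). If a vertex v is link simplicial in G̃, then v is link simplicial in G. -/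
open scoped Classical

universe u v

namespace SignedGraph
variable {V : Type} {G : SignedGraph V}

lemma EdgeAdj.symm' {s : Bool} {a b : V} (h : G.EdgeAdj s a b) : G.EdgeAdj s b a := by
  cases s <;> exact SimpleGraph.Adj.symm h

lemma EdgeAdj.ne' {s : Bool} {a b : V} (h : G.EdgeAdj s a b) : a ≠ b := by
  cases s <;> exact SimpleGraph.Adj.ne h

lemma edge_irrefl (b : Bool) (a : V) : ¬ G.EdgeAdj b a a := by
  cases b <;> exact fun h => SimpleGraph.irrefl _ h

lemma tilde_false {a b : V} : G.tilde.EdgeAdj false a b ↔ (G.pos.Adj a b ∨ G.neg.Adj a b) := by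
  simp [tilde, EdgeAdj]

lemma tilde_true {a b : V} : G.tilde.EdgeAdj true a b ↔ (G.pos.Adj a b ∧ G.neg.Adj a b) := by
  simp [tilde, EdgeAdj]

lemma edge_of_double {a b : V} (hd : G.pos.Adj a b ∧ G.neg.Adj a b) (s : Bool) :
    G.EdgeAdj s a b := by cases s <;> [exact hd.1; exact hd.2]

lemma iff_single {a b : V} {σ : Bool} (h1 : G.EdgeAdj σ a b) (h2 : ¬ G.EdgeAdj (!σ) a b)
    (c : Bool) : G.EdgeAdj c a b ↔ σ = c := by
  cases c <;> cases σ <;> simp_all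

end SignedGraph

/-- **Proposition 3.3 (second part).** If `G` has no induced subgraph isomorphic to an
unbalanced triangle, then a link-simplicial vertex of `G̃ = (G⁺ ∪ G⁻, G⁺ ∩ G⁻)` is link
simplicial in `G`. -/
theorem linkSimplicial_of_tilde {V : Type} (G : SignedGraph V)
    (htri : ¬ ∃ C : G.Cycle, C.n = 3 ∧ C.IsInduced ∧ ¬ C.Balanced)
    (v : V) (h : G.tilde.LinkSimplicial v) : G.LinkSimplicial v := by
  
  intro u u' s s' hne hvu hvu'
  by_cases hx : G.EdgeAdj (xor s s') u u'
  · exact ⟨xor s s', hx, by cases s <;> cases s' <;> decide⟩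
  · exfalso
    have hvu0 : G.tilde.EdgeAdj false v u := by
      rw [SignedGraph.tilde_false]; cases s
      · exact Or.inl hvu
      · exact Or.inr hvu
    have hvu'0 : G.tilde.EdgeAdj false v u' := by
      rw [SignedGraph.tilde_false]; cases s'
      · exact Or.inl hvu'
      · exact Or.inr hvu'
    have hxd : ¬ (G.pos.Adj u u' ∧ G.neg.Adj u u') := fun hd =>
      hx (SignedGraph.edge_of_double hd _)
    have hdu : ¬ (G.pos.Adj v u ∧ G.neg.Adj v u) := by
      intro hd
      obtain ⟨s'', h1, h2⟩ := h u u' true false hne (SignedGraph.tilde_true.mpr hd) hvu'0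
      cases s''
      · exact absurd h2 (by decide)
      · exact hxd (SignedGraph.tilde_true.mp h1)
    have hdu' : ¬ (G.pos.Adj v u' ∧ G.neg.Adj v u') := by
      intro hd
      obtain ⟨s'', h1, h2⟩ := h u' u true false hne.symm (SignedGraph.tilde_true.mpr hd) hvu0
      cases s''
      · exact absurd h2 (by decide)
      · exact hxd (And.imp SimpleGraph.Adj.symm SimpleGraph.Adj.symm
          (SignedGraph.tilde_true.mp h1))
    have hsu : ¬ G.EdgeAdj (!s) v u := by
      intro hb; apply hdu; cases s
      · exact ⟨hvu, hb⟩
      · exact ⟨hb, hvu⟩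
    have hsu' : ¬ G.EdgeAdj (!s') v u' := by
      intro hb; apply hdu'; cases s'
      · exact ⟨hvu', hb⟩
      · exact ⟨hb, hvu'⟩
    obtain ⟨s'', h1, h2⟩ := h u u' false false hne hvu0 hvu'0
    have hs0 : s'' = false := by
      cases s''
      · rfl
      · exact absurd h2 (by decide)
    subst hs0
    have hun := SignedGraph.tilde_false.mp h1
    have ht : G.EdgeAdj (!(xor s s')) u u' := by
      rcases hun with hp | hn
      · cases hs : xor s s'
        · exact absurd (show G.EdgeAdj (xor s s') u u' by rw [hs]; exact hp) hx
        · exact hp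
      · cases hs : xor s s'
        · exact hn
        · exact absurd (show G.EdgeAdj (xor s s') u u' by rw [hs]; exact hn) hx
    have htx : ¬ G.EdgeAdj (!(!(xor s s'))) u u' := by rw [Bool.not_not]; exact hx
    have hvune : v ≠ u := hvu.ne'
    have hvu'ne : v ≠ u' := hvu'.ne'
    set vt : ℕ → V := fun k => if k = 0 then v else if k = 1 then u else u' with hvt
    set sg : ℕ → Bool := fun k => if k = 0 then s else if k = 1 then !(xor s s') else s'
      with hsg
    have hunb : ¬ Even (((Finset.range 3).filter fun i => sg i = true).card) := by
      rw [hsg]; cases s <;> cases s' <;> decide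
    refine htri ⟨⟨3, le_refl 3, vt, ?_, sg, ?_⟩, rfl, ?_, hunb⟩
    · intro i j hi hj hij
      interval_cases i <;> interval_cases j <;>
        first
          | rfl
          | (exfalso; revert hij;
             simp [hvt, hvune, hvu'ne, hne, Ne.symm hvune, Ne.symm hvu'ne, Ne.symm hne])
    · intro i hi
      interval_cases i <;> simp only [hvt, hsg] <;> norm_num
      · exact hvu
      · exact ht
      · exact hvu'.symm'
    · intro i j hi hj b
      interval_cases i <;> interval_cases j <;> simp only [hvt, hsg] <;> norm_num
      · exact SignedGraph.edge_irrefl b v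
      · exact SignedGraph.iff_single hvu hsu b
      · exact SignedGraph.iff_single hvu' hsu' b
      · exact SignedGraph.iff_single hvu.symm' (fun hb => hsu hb.symm') b
      · exact SignedGraph.edge_irrefl b u
      · exact (SignedGraph.iff_single ht htx b).trans (by cases b <;> simp)
      · exact SignedGraph.iff_single hvu'.symm' (fun hb => hsu' hb.symm') b
      · exact (SignedGraph.iff_single ht.symm' (fun hb => htx hb.symm') b).trans
          (by cases b <;> simp)
      · exact SignedGraph.edge_irrefl b u'
end

section
/- Let G be a signed graph whose underlying simple graph G̃⁺ = G⁺∪G⁻ is complete. If G satisfies conditions (I) and (III), then the simple graph of double edges G̃⁻ = G⁺∩G⁻ is a threshold graph. -/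
open scoped Classical

universe u v

/-! ## Auxiliary material for the proof -/

section ThresholdAux

variable {V : Type} {D : SimpleGraph V}

/-- Nested (vicinal) neighborhoods. -/
def NestAux (D : SimpleGraph V) : Prop :=
  ∀ u v : V, (∀ w, w ≠ u → w ≠ v → D.Adj u w → D.Adj v w) ∨
             (∀ w, w ≠ u → w ≠ v → D.Adj v w → D.Adj u w)

lemma nestAux_trans {u v t : V}
    (h1 : ∀ w, w ≠ u → w ≠ v → D.Adj u w → D.Adj v w)
    (h2 : ∀ w, w ≠ v → w ≠ t → D.Adj v w → D.Adj t w) :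
    ∀ w, w ≠ u → w ≠ t → D.Adj u w → D.Adj t w := by
  intro w hwu hwt huw
  by_cases hwv : w = v
  · subst hwv
    by_cases hut : u = t
    · subst hut; exact huw
    · have h3 : D.Adj t u := h2 u (fun h => hwu h.symm) hut huw.symm
      have h4 : D.Adj w t := h1 t (fun h => hut h.symm) (Ne.symm hwt) h3.symm
      exact h4.symm
  · exact h2 w hwv hwt (h1 w hwu hwv huw)

lemma nestAux_max (hnest : NestAux D) :
    ∀ S : Finset V, S.Nonempty →
      ∃ v ∈ S, ∀ u ∈ S, ∀ w, w ≠ u → w ≠ v → D.Adj u w → D.Adj v w := by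
  intro S
  induction S using Finset.induction_on with
  | empty => intro h; exact absurd h (by simp)
  | @insert a T ha ih =>
    intro _
    by_cases hT : T.Nonempty
    · obtain ⟨v, hvT, hvmax⟩ := ih hT
      rcases hnest a v with h | h
      · refine ⟨v, Finset.mem_insert_of_mem hvT, ?_⟩
        intro u hu
        rcases Finset.mem_insert.mp hu with rfl | hu
        · exact h
        · exact hvmax u hu
      · refine ⟨a, Finset.mem_insert_self a T, ?_⟩
        intro u hu
        rcases Finset.mem_insert.mp hu with rfl | hu
        · intro w _ _ h; exact h
        · exact nestAux_trans (hvmax u hu) (fun w hw1 hw2 => h w hw2 hw1)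
    · refine ⟨a, Finset.mem_insert_self a T, ?_⟩
      intro u hu
      rcases Finset.mem_insert.mp hu with rfl | hu
      · intro w _ _ h; exact h
      · exact absurd ⟨u, hu⟩ hT

lemma nestAux_key (hnest : NestAux D) (S : Finset V) (hS : S.Nonempty) :
    ∃ v ∈ S, (∀ u ∈ S, u ≠ v → ¬ D.Adj v u) ∨ (∀ u ∈ S, u ≠ v → D.Adj v u) := by
  obtain ⟨v, hvS, hvmax⟩ := nestAux_max hnest S hS
  by_cases hdom : ∀ u ∈ S, u ≠ v → D.Adj v u
  · exact ⟨v, hvS, Or.inr hdom⟩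
  · push_neg at hdom
    obtain ⟨u, huS, huv, hnadj⟩ := hdom
    refine ⟨u, huS, Or.inl ?_⟩
    intro y hyS hyu hadj
    have hyv : y ≠ v := fun h => by subst h; exact hnadj hadj.symm
    have : D.Adj v u := hvmax y hyS u (Ne.symm hyu) huv hadj.symm
    exact hnadj this

lemma exists_good_list (hnest : NestAux D) :
    ∀ (n : ℕ) (S : Finset V), S.card = n →
      ∃ l : List V, l.Nodup ∧ l.toFinset = S ∧
        ∀ i (hi : i < l.length),
          (∀ j (hj : j < l.length), j < i → ¬ D.Adj (l.get ⟨i, hi⟩) (l.get ⟨j, hj⟩)) ∨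
          (∀ j (hj : j < l.length), j < i → D.Adj (l.get ⟨i, hi⟩) (l.get ⟨j, hj⟩)) := by
  intro n
  induction n with
  | zero =>
    intro S hS
    refine ⟨[], by simp, ?_, by simp⟩
    simp [Finset.card_eq_zero.mp hS]
  | succ m ih =>
    intro S hS
    have hSne : S.Nonempty := Finset.card_pos.mp (by omega)
    obtain ⟨v, hvS, hvprop⟩ := nestAux_key hnest S hSne
    have hcard : (S.erase v).card = m := by
      rw [Finset.card_erase_of_mem hvS, hS]; omega
    obtain ⟨l, hnd, htf, hQ⟩ := ih (S.erase v) hcard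
    have hvnl : v ∉ l := by
      intro h
      have : v ∈ S.erase v := htf ▸ List.mem_toFinset.mpr h
      exact (Finset.mem_erase.mp this).1 rfl
    refine ⟨l ++ [v], ?_, ?_, ?_⟩
    · simp [List.nodup_append, hnd, hvnl]
      exact fun a ha h => hvnl (h ▸ ha)
    · rw [List.toFinset_append]
      simp only [List.toFinset_cons, List.toFinset_nil, insert_empty_eq]
      rw [htf, Finset.union_comm, ← Finset.insert_eq, Finset.insert_erase hvS]
    · intro i hi
      have hlen : (l ++ [v]).length = l.length + 1 := by simp
      by_cases hil : i < l.length
      · have hgi : (l ++ [v]).get ⟨i, hi⟩ = l.get ⟨i, hil⟩ := by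
          simp [List.getElem_append_left hil]
        rcases hQ i hil with h | h
        · left
          intro j hj hji
          have hjl : j < l.length := lt_trans hji hil
          have hgj : (l ++ [v]).get ⟨j, hj⟩ = l.get ⟨j, hjl⟩ := by
            simp [List.getElem_append_left hjl]
          rw [hgi, hgj]; exact h j hjl hji
        · right
          intro j hj hji
          have hjl : j < l.length := lt_trans hji hil
          have hgj : (l ++ [v]).get ⟨j, hj⟩ = l.get ⟨j, hjl⟩ := by
            simp [List.getElem_append_left hjl]
          rw [hgi, hgj]; exact h j hjl hji
      · have hieq : i = l.length := by rw [hlen] at hi; omega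
        have hgi : (l ++ [v]).get ⟨i, hi⟩ = v := by
          subst hieq
          simp
        have hmem : ∀ j (hj : j < (l ++ [v]).length), j < i →
            (l ++ [v]).get ⟨j, hj⟩ ∈ S ∧ (l ++ [v]).get ⟨j, hj⟩ ≠ v := by
          intro j hj hji
          have hjl : j < l.length := by omega
          have hgj : (l ++ [v]).get ⟨j, hj⟩ = l.get ⟨j, hjl⟩ := by
            simp [List.getElem_append_left hjl]
          have : l.get ⟨j, hjl⟩ ∈ S.erase v := by
            rw [← htf]
            exact List.mem_toFinset.mpr (l.get_mem _)
          rw [hgj]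
          exact ⟨(Finset.mem_erase.mp this).2, (Finset.mem_erase.mp this).1⟩
        rcases hvprop with h | h
        · left
          intro j hj hji
          obtain ⟨hmS, hmv⟩ := hmem j hj hji
          rw [hgi]
          exact h _ hmS hmv
        · right
          intro j hj hji
          obtain ⟨hmS, hmv⟩ := hmem j hj hji
          rw [hgi]
          exact h _ hmS hmv

lemma threshold_of_nestAux [Fintype V] (hnest : NestAux D) : D.IsThresholdGraph := by
  obtain ⟨l, hnd, htf, hQ⟩ := exists_good_list hnest (Fintype.card V) Finset.univ (by simp)
  have hlen : l.length = Fintype.card V := by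
    rw [← List.toFinset_card_of_nodup hnd, htf, Finset.card_univ]
  have hinj : Function.Injective (fun i : Fin (Fintype.card V) =>
      l.get (Fin.cast hlen.symm i)) := by
    intro x y h
    have := List.nodup_iff_injective_get.mp hnd h
    exact Fin.cast_injective _ (by exact this)
  have hbij : Function.Bijective (fun i : Fin (Fintype.card V) =>
      l.get (Fin.cast hlen.symm i)) :=
    (Fintype.bijective_iff_injective_and_card _).mpr ⟨hinj, by simp⟩
  refine ⟨Equiv.ofBijective _ hbij, ?_⟩
  intro i
  rcases hQ i.val (by omega) with h | h
  · left
    intro j hji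
    exact h j.val (by omega) hji
  · right
    intro j hji
    exact h j.val (by omega) hji

end ThresholdAux

namespace SignedGraph

lemma card_filter_range4 (f : ℕ → Bool) :
    ((Finset.range 4).filter fun i => f i = true).card
      = cond (f 0) 1 0 + cond (f 1) 1 0 + cond (f 2) 1 0 + cond (f 3) 1 0 := by
  rw [Finset.card_filter]
  rw [Finset.sum_range_succ, Finset.sum_range_succ, Finset.sum_range_succ,
    Finset.sum_range_succ, Finset.sum_range_zero]
  cases f 0 <;> cases f 1 <;> cases f 2 <;> cases f 3 <;> simp

lemma card_filter_Ico02 (f : ℕ → Bool) :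
    ((Finset.Ico 0 2).filter fun i => f i = true).card
      = cond (f 0) 1 0 + cond (f 1) 1 0 := by
  rw [Finset.card_filter, Nat.Ico_zero_eq_range, Finset.sum_range_succ,
    Finset.sum_range_succ, Finset.sum_range_zero]
  cases f 0 <;> cases f 1 <;> simp

lemma card_filter_Ico13 (f : ℕ → Bool) :
    ((Finset.Ico 1 3).filter fun i => f i = true).card
      = cond (f 1) 1 0 + cond (f 2) 1 0 := by
  rw [Finset.card_filter, Finset.sum_Ico_eq_sum_range]
  rw [show (3:ℕ) - 1 = 2 from rfl, Finset.sum_range_succ, Finset.sum_range_succ,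
    Finset.sum_range_zero]
  cases f 1 <;> cases f 2 <;> simp

variable {V : Type}

lemma edge_symm (G : SignedGraph V) {s : Bool} {u v : V}
    (h : G.EdgeAdj s u v) : G.EdgeAdj s v u := by
  cases s
  · exact SimpleGraph.Adj.symm h
  · exact SimpleGraph.Adj.symm h

lemma keyCycle (G : SignedGraph V) (hI : G.BalancedChordal)
    (a b c d : V) (hab : a ≠ b) (hac : a ≠ c) (had : a ≠ d) (hbc : b ≠ c)
    (hbd : b ≠ d) (hcd : c ≠ d) (s0 s1 s2 s3 : Bool)
    (e0 : G.EdgeAdj s0 a b) (e1 : G.EdgeAdj s1 b c) (e2 : G.EdgeAdj s2 c d)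
    (e3 : G.EdgeAdj s3 d a)
    (hbal : Even (cond s0 1 0 + cond s1 1 0 + cond s2 1 0 + cond s3 1 0 : ℕ)) :
    (∃ s, G.EdgeAdj s a c ∧ Even (cond s0 1 0 + cond s1 1 0 + cond s 1 0 : ℕ)) ∨
    (∃ s, G.EdgeAdj s b d ∧ Even (cond s1 1 0 + cond s2 1 0 + cond s 1 0 : ℕ)) := by
  set vf : ℕ → V := fun i => if i = 0 then a else if i = 1 then b else if i = 2 then c else d
    with hvf
  set sf : ℕ → Bool := fun i => if i = 0 then s0 else if i = 1 then s1 else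
      if i = 2 then s2 else s3 with hsf
  have hv0 : vf 0 = a := rfl
  have hv1 : vf 1 = b := rfl
  have hv2 : vf 2 = c := rfl
  have hv3 : vf 3 = d := rfl
  have hs0 : sf 0 = s0 := rfl
  have hs1 : sf 1 = s1 := rfl
  have hs2 : sf 2 = s2 := rfl
  have hs3 : sf 3 = s3 := rfl
  let C : G.Cycle := {
    n := 4
    three_le := by norm_num
    vert := vf
    inj := by
      intro i j hi hj hij
      interval_cases i <;> interval_cases j <;>
        simp_all [hv0, hv1, hv2, hv3]
    sgn := sf
    adj := by
      intro i hi
      interval_cases i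
      · simpa [hv0, hv1, hs0] using e0
      · simpa [hv1, hv2, hs1] using e1
      · simpa [hv2, hv3, hs2] using e2
      · simpa [hv3, hv0, hs3] using e3 }
  have hC4 : C.n = 4 := rfl
  have hCv : C.vert = vf := rfl
  have hCs : C.sgn = sf := rfl
  have hbal' : C.Balanced := by
    unfold Cycle.Balanced
    rw [hC4, hCs, card_filter_range4, hs0, hs1, hs2, hs3]
    exact hbal
  obtain ⟨i, j, s, hij, hchord, hadj, hev1, hev2⟩ := hI C (by rw [hC4]) hbal'
  obtain ⟨hi4, hj4, hne, hnc1, hnc2, -⟩ := hchord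
  rw [hC4] at hi4 hj4 hnc1 hnc2
  have hcases : (i = 0 ∧ j = 2) ∨ (i = 1 ∧ j = 3) := by omega
  rcases hcases with ⟨rfl, rfl⟩ | ⟨rfl, rfl⟩
  · left
    refine ⟨s, ?_, ?_⟩
    · rw [hCv, hv0, hv2] at hadj; exact hadj
    · rw [hCs, card_filter_Ico02, hs0, hs1] at hev1
      exact hev1
  · right
    refine ⟨s, ?_, ?_⟩
    · rw [hCv, hv1, hv3] at hadj; exact hadj
    · rw [hCs, card_filter_Ico13, hs1, hs2] at hev1
      exact hev1

lemma single_sign (G : SignedGraph V) (hcomp : G.pos ⊔ G.neg = ⊤)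
    {u v : V} (huv : u ≠ v) (hnd : ¬ (G.pos ⊓ G.neg).Adj u v) :
    ∃ α : Bool, ∀ s : Bool, G.EdgeAdj s u v ↔ s = α := by
  have hor : G.pos.Adj u v ∨ G.neg.Adj u v := by
    have : (G.pos ⊔ G.neg).Adj u v := by rw [hcomp]; exact huv
    simpa using this
  rw [SimpleGraph.inf_adj] at hnd
  by_cases hp : G.pos.Adj u v
  · refine ⟨false, ?_⟩
    intro s
    cases s
    · simpa [EdgeAdj] using hp
    · simp only [EdgeAdj, cond]
      constructor
      · intro hn; exact absurd ⟨hp, hn⟩ hnd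
      · intro h; exact absurd h (by simp)
  · refine ⟨true, ?_⟩
    have hn : G.neg.Adj u v := hor.resolve_left hp
    intro s
    cases s
    · simp only [EdgeAdj, cond]
      constructor
      · intro h; exact absurd h hp
      · intro h; exact absurd h (by simp)
    · simpa [EdgeAdj] using hn

lemma double_edge (G : SignedGraph V) {u v : V} (h : (G.pos ⊓ G.neg).Adj u v) :
    ∀ s : Bool, G.EdgeAdj s u v := by
  rw [SimpleGraph.inf_adj] at h
  intro s; cases s
  · exact h.1
  · exact h.2

end SignedGraph

namespace SignedGraph

variable {V : Type}

lemma noP4 (G : SignedGraph V) (hcomp : G.pos ⊔ G.neg = ⊤) (hI : G.BalancedChordal)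
    {a b c d : V} (hab : a ≠ b) (hac : a ≠ c) (had : a ≠ d) (hbc : b ≠ c)
    (hbd : b ≠ d) (hcd : c ≠ d)
    (Dab : (G.pos ⊓ G.neg).Adj a b) (Dbc : (G.pos ⊓ G.neg).Adj b c)
    (Dcd : (G.pos ⊓ G.neg).Adj c d)
    (nac : ¬ (G.pos ⊓ G.neg).Adj a c) (nbd : ¬ (G.pos ⊓ G.neg).Adj b d)
    (nad : ¬ (G.pos ⊓ G.neg).Adj a d) : False := by
  obtain ⟨α, hα⟩ := single_sign G hcomp hac nac
  obtain ⟨γ, hγ⟩ := single_sign G hcomp hbd nbd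
  obtain ⟨δ, hδ⟩ := single_sign G hcomp had nad
  have key := keyCycle G hI a b c d hab hac had hbc hbd hcd
    (!(xor α (xor (xor α γ) δ))) (xor (xor α γ) δ) (!(xor γ (xor (xor α γ) δ))) δ
    (double_edge G Dab _) (double_edge G Dbc _) (double_edge G Dcd _)
    (edge_symm G ((hδ δ).mpr rfl))
    (by cases α <;> cases γ <;> cases δ <;> decide)
  rcases key with ⟨s, hs, he⟩ | ⟨s, hs, he⟩
  · rw [(hα s).mp hs] at he
    revert he; cases α <;> cases γ <;> cases δ <;> decide
  · rw [(hγ s).mp hs] at he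
    revert he; cases α <;> cases γ <;> cases δ <;> decide

lemma noC4 (G : SignedGraph V) (hcomp : G.pos ⊔ G.neg = ⊤) (hI : G.BalancedChordal)
    {a b c d : V} (hab : a ≠ b) (hac : a ≠ c) (had : a ≠ d) (hbc : b ≠ c)
    (hbd : b ≠ d) (hcd : c ≠ d)
    (Dab : (G.pos ⊓ G.neg).Adj a b) (Dbc : (G.pos ⊓ G.neg).Adj b c)
    (Dcd : (G.pos ⊓ G.neg).Adj c d) (Dad : (G.pos ⊓ G.neg).Adj a d)
    (nac : ¬ (G.pos ⊓ G.neg).Adj a c) (nbd : ¬ (G.pos ⊓ G.neg).Adj b d) : False := by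
  obtain ⟨α, hα⟩ := single_sign G hcomp hac nac
  obtain ⟨γ, hγ⟩ := single_sign G hcomp hbd nbd
  have key := keyCycle G hI a b c d hab hac had hbc hbd hcd
    (!α) false (!γ) (xor α γ)
    (double_edge G Dab _) (double_edge G Dbc _) (double_edge G Dcd _)
    (edge_symm G (double_edge G Dad _))
    (by cases α <;> cases γ <;> decide)
  rcases key with ⟨s, hs, he⟩ | ⟨s, hs, he⟩
  · rw [(hα s).mp hs] at he
    revert he; cases α <;> decide
  · rw [(hγ s).mp hs] at he
    revert he; cases γ <;> decide

lemma obstruction_of_odd (G : SignedGraph V) {a b c d : V} {α β γ δ : Bool}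
    (hab : a ≠ b) (hac : a ≠ c) (had : a ≠ d) (hbc : b ≠ c) (hbd : b ≠ d) (hcd : c ≠ d)
    (pab : G.pos.Adj a b) (nab : G.neg.Adj a b)
    (pcd : G.pos.Adj c d) (ncd : G.neg.Adj c d)
    (pac : G.pos.Adj a c ↔ (false = α)) (nac' : G.neg.Adj a c ↔ (true = α))
    (pad : G.pos.Adj a d ↔ (false = δ)) (nad' : G.neg.Adj a d ↔ (true = δ))
    (pbc : G.pos.Adj b c ↔ (false = β)) (nbc' : G.neg.Adj b c ↔ (true = β))
    (pbd : G.pos.Adj b d ↔ (false = γ)) (nbd' : G.neg.Adj b d ↔ (true = γ))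
    (hodd : xor (xor α β) (xor γ δ) = true) :
    ∃ ν : Fin 4 → Bool, G.HasInducedCopy (obstruction.switch ν) := by
  have pba := (G.pos.adj_comm b a).trans (iff_true_intro pab)
  have nba := (G.neg.adj_comm b a).trans (iff_true_intro nab)
  have pdc := (G.pos.adj_comm d c).trans (iff_true_intro pcd)
  have ndc := (G.neg.adj_comm d c).trans (iff_true_intro ncd)
  have pca := (G.pos.adj_comm c a).trans pac
  have nca := (G.neg.adj_comm c a).trans nac'
  have pda := (G.pos.adj_comm d a).trans pad
  have nda := (G.neg.adj_comm d a).trans nad'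
  have pcb := (G.pos.adj_comm c b).trans pbc
  have ncb := (G.neg.adj_comm c b).trans nbc'
  have pdb := (G.pos.adj_comm d b).trans pbd
  have ndb := (G.neg.adj_comm d b).trans nbd'
  have paa : G.pos.Adj a a ↔ False := iff_false_intro (G.pos.irrefl)
  have pbb : G.pos.Adj b b ↔ False := iff_false_intro (G.pos.irrefl)
  have pcc : G.pos.Adj c c ↔ False := iff_false_intro (G.pos.irrefl)
  have pdd : G.pos.Adj d d ↔ False := iff_false_intro (G.pos.irrefl)
  have naa : G.neg.Adj a a ↔ False := iff_false_intro (G.neg.irrefl)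
  have nbb : G.neg.Adj b b ↔ False := iff_false_intro (G.neg.irrefl)
  have ncc : G.neg.Adj c c ↔ False := iff_false_intro (G.neg.irrefl)
  have ndd : G.neg.Adj d d ↔ False := iff_false_intro (G.neg.irrefl)
  refine ⟨fun i => if i = 0 then false else if i = 1 then !(xor α β) else
      if i = 2 then !α else δ,
    fun i => if i = 0 then a else if i = 1 then b else if i = 2 then c else d,
    ?_, ?_, ?_⟩
  · intro x y hxy
    fin_cases x <;> fin_cases y <;> simp at hxy ⊢ <;>
      first
        | rfl
        | exact absurd hxy hab | exact absurd hxy hac | exact absurd hxy had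
        | exact absurd hxy hbc | exact absurd hxy hbd | exact absurd hxy hcd
        | exact absurd hxy.symm hab | exact absurd hxy.symm hac
        | exact absurd hxy.symm had | exact absurd hxy.symm hbc
        | exact absurd hxy.symm hbd | exact absurd hxy.symm hcd
  · intro x y
    fin_cases x <;> fin_cases y <;>
      simp only [obstruction, SignedGraph.switch, SimpleGraph.fromRel_adj] <;>
      simp [pab, pcd, pba, pdc, pac, pca, pad, pda, pbc, pcb, pbd, pdb,
        paa, pbb, pcc, pdd] <;>
      revert hodd <;> cases α <;> cases β <;> cases γ <;> cases δ <;> decide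
  · intro x y
    fin_cases x <;> fin_cases y <;>
      simp only [obstruction, SignedGraph.switch, SimpleGraph.fromRel_adj] <;>
      simp [nab, ncd, nba, ndc, nac', nca, nad', nda, nbc', ncb, nbd', ndb,
        naa, nbb, ncc, ndd] <;>
      revert hodd <;> cases α <;> cases β <;> cases γ <;> cases δ <;> decide

lemma no2K2 (G : SignedGraph V) (hcomp : G.pos ⊔ G.neg = ⊤) (hI : G.BalancedChordal)
    (hIII : G.NoInducedObstruction)
    {a b c d : V} (hab : a ≠ b) (hac : a ≠ c) (had : a ≠ d) (hbc : b ≠ c)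
    (hbd : b ≠ d) (hcd : c ≠ d)
    (Dab : (G.pos ⊓ G.neg).Adj a b) (Dcd : (G.pos ⊓ G.neg).Adj c d)
    (nac : ¬ (G.pos ⊓ G.neg).Adj a c) (nad : ¬ (G.pos ⊓ G.neg).Adj a d)
    (nbc : ¬ (G.pos ⊓ G.neg).Adj b c) (nbd : ¬ (G.pos ⊓ G.neg).Adj b d) : False := by
  obtain ⟨α, hα⟩ := single_sign G hcomp hac nac
  obtain ⟨δ, hδ⟩ := single_sign G hcomp had nad
  obtain ⟨β, hβ⟩ := single_sign G hcomp hbc nbc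
  obtain ⟨γ, hγ⟩ := single_sign G hcomp hbd nbd
  have Dab' := Dab; rw [SimpleGraph.inf_adj] at Dab'
  have Dcd' := Dcd; rw [SimpleGraph.inf_adj] at Dcd'
  obtain ⟨pab, nab⟩ := Dab'
  obtain ⟨pcd, ncd⟩ := Dcd'
  have hpar : xor (xor α β) (xor γ δ) = false := by
    by_contra hodd
    rw [Bool.not_eq_false] at hodd
    exact hIII (obstruction_of_odd G hab hac had hbc hbd hcd pab nab pcd ncd
      (hα false) (hα true) (hδ false) (hδ true) (hβ false) (hβ true)
      (hγ false) (hγ true) hodd)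
  have key : ∀ x : Bool,
      Even (cond x 1 0 + cond β 1 0 + cond α 1 0 : ℕ) ∨
      Even (cond β 1 0 + cond (xor (xor x β) δ) 1 0 + cond γ 1 0 : ℕ) := by
    intro x
    have k := keyCycle G hI a b c d hab hac had hbc hbd hcd
      x β (xor (xor x β) δ) δ
      (double_edge G Dab _) ((hβ β).mpr rfl) (double_edge G Dcd _)
      (edge_symm G ((hδ δ).mpr rfl))
      (by cases x <;> cases β <;> cases δ <;> decide)
    rcases k with ⟨s, hs, he⟩ | ⟨s, hs, he⟩
    · rw [(hα s).mp hs] at he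
      exact Or.inl he
    · rw [(hγ s).mp hs] at he
      exact Or.inr he
  have h0 := key false
  have h1 := key true
  revert hpar h0 h1
  cases α <;> cases β <;> cases γ <;> cases δ <;> decide

lemma nest_of (G : SignedGraph V) (hcomp : G.pos ⊔ G.neg = ⊤) (hI : G.BalancedChordal)
    (hIII : G.NoInducedObstruction) : NestAux (G.pos ⊓ G.neg) := by
  intro u v
  by_cases huv : u = v
  · subst huv; left; intro w _ _ h; exact h
  by_contra hcon
  push_neg at hcon
  obtain ⟨h1, h2⟩ := hcon
  obtain ⟨x, hxu, hxv, hux, hnvx⟩ := h1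
  obtain ⟨y, hyu, hyv, hvy, hnuy⟩ := h2
  have hxy : x ≠ y := by
    intro h; subst h; exact hnuy hux
  by_cases huvE : (G.pos ⊓ G.neg).Adj u v <;> by_cases hxyE : (G.pos ⊓ G.neg).Adj x y
  · -- C4 : u - x - y - v - u
    exact noC4 G hcomp hI (Ne.symm hxu) (Ne.symm hyu) huv hxy hxv hyv
      hux hxyE hvy.symm huvE hnuy (fun h => hnvx h.symm)
  · -- P4 : x - u - v - y
    exact noP4 G hcomp hI hxu hxv hxy huv (Ne.symm hyu) (Ne.symm hyv)
      hux.symm huvE hvy (fun h => hnvx h.symm) hnuy hxyE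
  · -- P4 : u - x - y - v
    exact noP4 G hcomp hI (Ne.symm hxu) (Ne.symm hyu) huv hxy hxv hyv
      hux hxyE hvy.symm hnuy (fun h => hnvx h.symm) huvE
  · -- 2K2 : ux, vy
    exact no2K2 G hcomp hI hIII (Ne.symm hxu) huv (Ne.symm hyu) hxv hxy (Ne.symm hyv)
      hux hvy huvE hnuy (fun h => hnvx h.symm) hxyE

end SignedGraph

/-- **Proposition 4.1.** Suppose the underlying simple graph `G⁺ ∪ G⁻` is complete. If `G`
satisfies conditions (I) and (III), then the graph of double edges `G⁺ ∩ G⁻` is threshold. -/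
theorem doubles_threshold {V : Type} [Fintype V] (G : SignedGraph V)
    (hcomp : G.pos ⊔ G.neg = ⊤)
    (hI : G.BalancedChordal) (hIII : G.NoInducedObstruction) :
    (G.pos ⊓ G.neg).IsThresholdGraph := by
  exact threshold_of_nestAux (SignedGraph.nest_of G hcomp hI hIII)
end

section
/- Let G be a signed graph whose underlying simple graph G̃⁺ = G⁺∪G⁻ is complete. If G has no induced subgraph isomorphic to an unbalanced cycle of length three or more (condition (II)) and the graph of double edges G̃⁻ = G⁺∩G⁻ is a threshold graph, then G has a link elimination ordering. -/
open scoped Classical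

universe u v

section AuxLinkElim

open SignedGraph

variable {V : Type u}

lemma edgeAdj_symm' (G : SignedGraph V) {s : Bool} {a b : V}
    (h : G.EdgeAdj s a b) : G.EdgeAdj s b a := by
  cases s
  · exact h.symm
  · exact h.symm

lemma edgeAdj_ne' (G : SignedGraph V) {s : Bool} {a b : V}
    (h : G.EdgeAdj s a b) : a ≠ b := by
  cases s
  · exact h.ne
  · exact h.ne

lemma edgeAdj_self_false (G : SignedGraph V) (s : Bool) (a : V) :
    ¬ G.EdgeAdj s a a := by
  cases s
  · exact G.pos.irrefl
  · exact G.neg.irrefl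

lemma double_of_two (G : SignedGraph V) {s : Bool} {a b : V}
    (h1 : G.EdgeAdj s a b) (h2 : G.EdgeAdj (!s) a b) :
    (G.pos ⊓ G.neg).Adj a b := by
  cases s
  · exact ⟨h1, h2⟩
  · exact ⟨h2, h1⟩

lemma edge_of_double (G : SignedGraph V) {a b : V}
    (h : (G.pos ⊓ G.neg).Adj a b) (s : Bool) : G.EdgeAdj s a b := by
  cases s
  · exact h.1
  · exact h.2

lemma single_of_not (G : SignedGraph V) (hcomp : G.pos ⊔ G.neg = ⊤)
    {u u' : V} (hne : u ≠ u') {t : Bool} (ht : ¬ G.EdgeAdj t u u') :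
    G.EdgeAdj (!t) u u' := by
  have hadj : G.pos.Adj u u' ∨ G.neg.Adj u u' := by
    have h : (G.pos ⊔ G.neg).Adj u u' := by rw [hcomp]; exact hne
    exact h
  cases t
  · exact hadj.resolve_left ht
  · exact hadj.resolve_right ht

lemma single_iff (G : SignedGraph V) {s : Bool} {a b : V}
    (h : G.EdgeAdj s a b) (h' : ¬ G.EdgeAdj (!s) a b) (sb : Bool) :
    G.EdgeAdj sb a b ↔ s = sb := by
  constructor
  · intro hh
    by_contra hsb
    have hbs : sb = !s := by cases sb <;> cases s <;> simp_all
    exact h' (hbs ▸ hh)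
  · rintro rfl; exact h

lemma unbal_fact : ∀ s s' : Bool,
    ¬ Even (((Finset.range 3).filter fun i =>
        (if i = 0 then s else if i = 1 then !(xor s s') else s') = true).card) := by
  decide

lemma core (G : SignedGraph V)
    (hcomp : G.pos ⊔ G.neg = ⊤)
    (hII : G.NoInducedUnbalancedCycle)
    (v u u' : V) (hne : u ≠ u')
    (hd1 : (G.pos ⊓ G.neg).Adj v u → (G.pos ⊓ G.neg).Adj u u')
    (hd2 : (G.pos ⊓ G.neg).Adj v u' → (G.pos ⊓ G.neg).Adj u' u)
    (s s' : Bool) (h1 : G.EdgeAdj s v u) (h2 : G.EdgeAdj s' v u') :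
    ∃ s'' : Bool, G.EdgeAdj s'' u u' ∧
      Even ((cond s 1 0 + cond s' 1 0 + cond s'' 1 0 : ℕ)) := by
  by_cases ht : G.EdgeAdj (xor s s') u u'
  · exact ⟨xor s s', ht, by cases s <;> cases s' <;> decide⟩
  exfalso
  have h3 : G.EdgeAdj (!(xor s s')) u u' := single_of_not G hcomp hne ht
  have hnd : ¬ (G.pos ⊓ G.neg).Adj u u' := fun h => ht (edge_of_double G h _)
  have h1' : ¬ G.EdgeAdj (!s) v u := fun h => hnd (hd1 (double_of_two G h1 h))
  have h2' : ¬ G.EdgeAdj (!s') v u' := fun h => hnd ((hd2 (double_of_two G h2 h)).symm)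
  have h3' : ¬ G.EdgeAdj (!(!(xor s s'))) u u' := by rwa [Bool.not_not]
  have hvu : v ≠ u := edgeAdj_ne' G h1
  have hvu' : v ≠ u' := edgeAdj_ne' G h2
  have e1 := single_iff G h1 h1'
  have e2 := single_iff G h2 h2'
  have e3 := single_iff G h3 h3'
  have e1s : ∀ sb, G.EdgeAdj sb u v ↔ s = sb := fun sb =>
    ⟨fun hh => (e1 sb).mp (edgeAdj_symm' G hh), fun hh => edgeAdj_symm' G ((e1 sb).mpr hh)⟩
  have e2s : ∀ sb, G.EdgeAdj sb u' v ↔ s' = sb := fun sb =>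
    ⟨fun hh => (e2 sb).mp (edgeAdj_symm' G hh), fun hh => edgeAdj_symm' G ((e2 sb).mpr hh)⟩
  have e3s : ∀ sb, G.EdgeAdj sb u' u ↔ (!(xor s s')) = sb := fun sb =>
    ⟨fun hh => (e3 sb).mp (edgeAdj_symm' G hh), fun hh => edgeAdj_symm' G ((e3 sb).mpr hh)⟩
  apply hII
  refine ⟨⟨3, le_refl 3, fun m => if m = 0 then v else if m = 1 then u else u', ?_,
      fun m => if m = 0 then s else if m = 1 then !(xor s s') else s', ?_⟩, ?_, ?_⟩
  · intro i j hi hj hij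
    interval_cases i <;> interval_cases j <;> simp_all
  · intro i hi
    interval_cases i
    · simpa using h1
    · simpa using h3
    · simpa using edgeAdj_symm' G h2
  · intro i j hi hj sb
    interval_cases i <;> interval_cases j <;>
      simp [e1, e1s, e2, e2s, e3, e3s, edgeAdj_self_false]
  · exact fun hb => unbal_fact s s' hb

lemma exists_good_perm {n : ℕ} (F : Fin n → Prop) :
    ∃ σ : Equiv.Perm (Fin n), ∀ p q : Fin n, p < q →
      (F (σ q) → F (σ p) ∧ σ p < σ q) ∧ (¬ F (σ p) → ¬ F (σ q) ∧ σ p < σ q) := by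
  classical
  set g : Fin n → ℕ := fun a => (if F a then 0 else 1) * n + a with hg
  have hval : ∀ a, g a = (if F a then 0 else 1) * n + a := fun _ => rfl
  have hginj : Function.Injective g := by
    intro a b hab
    have ha := a.isLt
    have hb := b.isLt
    rw [hval a, hval b] at hab
    split_ifs at hab <;> exact Fin.ext (by omega)
  have hsm : StrictMono (g ∘ Tuple.sort g) :=
    (Tuple.monotone_sort g).strictMono_of_injective
      (hginj.comp (Tuple.sort g).injective)
  refine ⟨Tuple.sort g, fun p q hpq => ?_⟩
  have hlt : g ((Tuple.sort g) p) < g ((Tuple.sort g) q) := hsm hpq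
  set a := (Tuple.sort g) p with hap
  set b := (Tuple.sort g) q with hbq
  have ha := a.isLt
  have hb := b.isLt
  rw [hval a, hval b] at hlt
  constructor
  · intro hFb
    rw [if_pos hFb] at hlt
    by_cases hFa : F a
    · rw [if_pos hFa] at hlt
      exact ⟨hFa, Fin.lt_def.mpr (by omega)⟩
    · rw [if_neg hFa] at hlt
      exact absurd hlt (by omega)
  · intro hFa
    rw [if_neg hFa] at hlt
    by_cases hFb : F b
    · rw [if_pos hFb] at hlt
      exact absurd hlt (by omega)
    · rw [if_neg hFb] at hlt
      exact ⟨hFb, Fin.lt_def.mpr (by omega)⟩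

lemma threshold_order {V : Type} [Fintype V] (D : SimpleGraph V)
    (h : D.IsThresholdGraph) :
    ∃ e : Fin (Fintype.card V) ≃ V, ∀ i j k : Fin (Fintype.card V),
      j < i → k < i → j ≠ k → D.Adj (e i) (e j) → D.Adj (e j) (e k) := by
  classical
  obtain ⟨e0, he0⟩ := h
  obtain ⟨σ, hσ⟩ := exists_good_perm
    (fun a => ∀ b, b < a → D.Adj (e0 a) (e0 b))
  refine ⟨σ.trans e0, fun i j k hj hk hjk hadj => ?_⟩
  simp only [Equiv.trans_apply] at hadj ⊢
  have hIso : ∀ a : Fin (Fintype.card V),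
      ¬ (∀ b, b < a → D.Adj (e0 a) (e0 b)) → ∀ b, b < a → ¬ D.Adj (e0 a) (e0 b) :=
    fun a ha => (he0 a).resolve_right ha
  by_cases hFb : ∀ b, b < σ j → D.Adj (e0 (σ j)) (e0 b)
  · rcases lt_or_ge (σ k) (σ j) with hbc | hbc
    · exact hFb (σ k) hbc
    · have hbc' : σ j < σ k :=
        lt_of_le_of_ne hbc (fun hh => hjk (σ.injective hh))
      by_cases hFc : ∀ b, b < σ k → D.Adj (e0 (σ k)) (e0 b)
      · exact (hFc (σ j) hbc').symm
      · obtain ⟨hFi, hca⟩ := (hσ k i hk).2 hFc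
        exact absurd hadj (hIso (σ i) hFi (σ j) (hbc'.trans hca))
  · obtain ⟨hFi, hba⟩ := (hσ j i hj).2 hFb
    exact absurd hadj (hIso (σ i) hFi (σ j) hba)

lemma induce_edgeAdj (G : SignedGraph V) (W : Set V) (s : Bool) (a b : ↥W) :
    (G.induce W).EdgeAdj s a b ↔ G.EdgeAdj s (↑a) (↑b) := by
  cases s <;> rfl

end AuxLinkElim

/-- **Proposition 4.2, (5) ⇒ (1).** Suppose the underlying simple graph `G⁺ ∪ G⁻` is
complete, `G` satisfies condition (II) and the graph of double edges `G⁺ ∩ G⁻` is threshold.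
Then `G` has a link elimination ordering. -/
theorem link_elim_of_threshold {V : Type} [Fintype V] (G : SignedGraph V)
    (hcomp : G.pos ⊔ G.neg = ⊤)
    (hII : G.NoInducedUnbalancedCycle)
    (hth : (G.pos ⊓ G.neg).IsThresholdGraph) :
    G.HasLinkElimOrdering := by
  classical
  obtain ⟨e, hP2⟩ := threshold_order (G.pos ⊓ G.neg) hth
  refine ⟨e, fun i => ?_⟩
  intro u u' s s' hne h1 h2
  rw [induce_edgeAdj] at h1 h2
  obtain ⟨j, hj, hju⟩ := u.2
  obtain ⟨k, hk, hku⟩ := u'.2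
  have huv : (u : V) ≠ e i := fun h => (edgeAdj_ne' G h1) h.symm
  have hu'v : (u' : V) ≠ e i := fun h => (edgeAdj_ne' G h2) h.symm
  have hji : j < i := lt_of_le_of_ne hj (fun h => huv (by rw [← hju, h]))
  have hki : k < i := lt_of_le_of_ne hk (fun h => hu'v (by rw [← hku, h]))
  have hne' : (u : V) ≠ ↑u' := Subtype.coe_injective.ne hne
  have hjk : j ≠ k := fun h => hne' (by rw [← hju, ← hku, h])
  have hd1 : (G.pos ⊓ G.neg).Adj (e i) ↑u → (G.pos ⊓ G.neg).Adj ↑u ↑u' := by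
    rw [← hju, ← hku]; exact hP2 i j k hji hki hjk
  have hd2 : (G.pos ⊓ G.neg).Adj (e i) ↑u' → (G.pos ⊓ G.neg).Adj ↑u' ↑u := by
    rw [← hju, ← hku]; exact hP2 i k j hki hji (Ne.symm hjk)
  obtain ⟨s'', h3, hpar⟩ := core G hcomp hII (e i) ↑u ↑u' hne' hd1 hd2 s s' h1 h2
  exact ⟨s'', (induce_edgeAdj G _ s'' u u').mpr h3, hpar⟩
end

section
/- If a signed graph G has a link elimination ordering, then the signed-graphic arrangement A(G) is supersolvable. -/
open scoped Classical

universe u v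

namespace SSol

set_option linter.unusedSectionVars false
variable {K : Type} [Field K] [CharZero K] {V : Type} [Fintype V]

/-- abbreviation for coordinate projections -/
noncomputable abbrev pr (K : Type) [Field K] {V : Type} [Fintype V] (i : V) :
    (V → K) →ₗ[K] K := LinearMap.proj i

/-- sign of a boolean -/
def sgn (K : Type) [Field K] (b : Bool) : K := if b then -1 else 1

@[simp] lemma sgn_true : sgn K true = -1 := rfl
@[simp] lemma sgn_false : sgn K false = 1 := rfl

lemma sgn_ne_zero (b : Bool) : sgn K b ≠ 0 := by
  cases b <;> simp [sgn]

lemma sgn_xor (p q : Bool) : sgn K (xor p q) = sgn K p * sgn K q := by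
  cases p <;> cases q <;> simp [sgn]

lemma sgn_mul_self (p : Bool) : sgn K p * sgn K p = 1 := by
  cases p <;> simp [sgn]

/-- The linear form of an edge of sign `η` -/
noncomputable def eform (K : Type) [Field K] {V : Type} [Fintype V] (η : Bool) (i j : V) :
    (V → K) →ₗ[K] K := pr K i - sgn K η • pr K j

lemma eform_apply (η : Bool) (i j : V) (x : V → K) :
    eform K η i j x = x i - sgn K η * x j := rfl

lemma mem_ker_eform {η : Bool} {i j : V} {x : V → K} :
    x ∈ LinearMap.ker (eform K η i j) ↔ x i = sgn K η * x j := by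
  rw [LinearMap.mem_ker, eform_apply, sub_eq_zero]

lemma ker_eform_symm (η : Bool) (i j : V) :
    LinearMap.ker (eform K η i j) = LinearMap.ker (eform K η j i) := by
  ext x
  rw [mem_ker_eform, mem_ker_eform]
  constructor <;> intro hx
  · rw [hx, ← mul_assoc, sgn_mul_self, one_mul]
  · rw [hx, ← mul_assoc, sgn_mul_self, one_mul]

lemma ker_eform_self_true (i : V) :
    LinearMap.ker (eform K true i i) = LinearMap.ker (pr K i) := by
  ext x
  rw [mem_ker_eform, LinearMap.mem_ker]
  simp only [sgn_true, LinearMap.proj_apply, neg_one_mul]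
  constructor
  · intro hx; linear_combination hx / 2
  · intro hx; rw [hx]; ring

lemma ker_eform_self_false (i : V) :
    LinearMap.ker (eform K false i i) = ⊤ := by
  ext x; simp [LinearMap.mem_ker, eform_apply]

/-- composition of relations -/
lemma ker_eform_comp (ρ η : Bool) (u v w : V) :
    LinearMap.ker (eform K ρ u v) ⊓ LinearMap.ker (eform K η v w) ≤
      LinearMap.ker (eform K (xor ρ η) u w) := by
  intro x hx
  rw [Submodule.mem_inf] at hx
  obtain ⟨h1, h2⟩ := hx
  rw [mem_ker_eform] at h1 h2 ⊢
  rw [h1, h2, sgn_xor, mul_assoc]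

lemma ker_pr_inf_le (ρ : Bool) (u v : V) :
    LinearMap.ker (eform K ρ u v) ⊓ LinearMap.ker (pr K v) ≤ LinearMap.ker (pr K u) := by
  intro x hx
  rw [Submodule.mem_inf] at hx
  obtain ⟨h1, h2⟩ := hx
  rw [LinearMap.mem_ker] at h2 ⊢
  rw [mem_ker_eform] at h1
  simp only [LinearMap.proj_apply] at *
  rw [h1, h2, mul_zero]

lemma ker_pr_le_eform (η : Bool) (i j : V) :
    LinearMap.ker (pr K i) ⊓ LinearMap.ker (pr K j) ≤ LinearMap.ker (eform K η i j) := by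
  intro x hx
  rw [Submodule.mem_inf] at hx
  obtain ⟨h1, h2⟩ := hx
  rw [LinearMap.mem_ker] at h1 h2
  rw [mem_ker_eform]
  simp only [LinearMap.proj_apply] at *
  rw [h1, h2, mul_zero]

lemma ker_eform_ne_ker_pr {i j : V} (hij : i ≠ j) (η : Bool) (s : V) :
    LinearMap.ker (eform K η i j) ≠ LinearMap.ker (pr K s) := by
  intro hEq
  by_cases hs : s = i
  · subst hs
    -- vector: single i 1 + sgn η • single j 1  is in ker eform but not ker pr i
    have hx : ((Pi.single s 1 : V → K) + sgn K η • (Pi.single j 1 : V → K)) ∈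
        LinearMap.ker (eform K η s j) := by
      rw [mem_ker_eform]
      simp [Pi.single_apply, hij, (Ne.symm hij), sgn_mul_self]
    rw [hEq, LinearMap.mem_ker] at hx
    simp [Pi.single_apply, Ne.symm hij] at hx
  · -- single s 1 separates unless s = i; also handle s = j similarly
    by_cases hs' : s = j
    · subst hs'
      have hx : ((Pi.single i 1 : V → K) + sgn K η • (Pi.single s 1 : V → K)) ∈
          LinearMap.ker (eform K η i s) := by
        rw [mem_ker_eform]
        simp [Pi.single_apply, hij, (Ne.symm hij), sgn_mul_self]
      rw [hEq, LinearMap.mem_ker] at hx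
      have := sgn_ne_zero (K := K) η
      simp [Pi.single_apply, hij] at hx
      exact this hx
    · have hx : ((Pi.single s 1 : V → K)) ∈ LinearMap.ker (eform K η i j) := by
        rw [mem_ker_eform]
        simp [Pi.single_apply, Ne.symm hs, Ne.symm hs']
      rw [hEq, LinearMap.mem_ker] at hx
      simp [Pi.single_apply] at hx

end SSol
namespace SSol
set_option linter.unusedSectionVars false
variable {K : Type} [Field K] [CharZero K] {V : Type} [Fintype V]

lemma eform_false_eq (i j : V) : eform K false i j = pr K i - pr K j := by
  simp [eform]

lemma eform_true_eq (i j : V) : eform K true i j = pr K i + pr K j := by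
  refine LinearMap.ext fun x => ?_
  show x i - sgn K true * x j = x i + x j
  rw [sgn_true, neg_one_mul, sub_neg_eq_add]

lemma mem_signedArr_iff (G : SignedGraph V) (φ : (V → K) →ₗ[K] K) :
    φ ∈ signedArr K G ↔ (∃ i, φ = pr K i) ∨
      (∃ i j, G.pos.Adj i j ∧ φ = eform K false i j) ∨
      (∃ i j, G.neg.Adj i j ∧ φ = eform K true i j) := by
  simp only [signedArr, Finset.mem_union, Finset.mem_image, Finset.mem_filter,
    Finset.mem_univ, true_and]
  constructor
  · rintro ((⟨i, rfl⟩ | ⟨⟨i, j⟩, hadj, rfl⟩) | ⟨⟨i, j⟩, hadj, rfl⟩)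
    · exact Or.inl ⟨i, rfl⟩
    · exact Or.inr (Or.inl ⟨i, j, hadj, (eform_false_eq i j).symm⟩)
    · exact Or.inr (Or.inr ⟨i, j, hadj, (eform_true_eq i j).symm⟩)
  · rintro (⟨i, rfl⟩ | ⟨i, j, hadj, rfl⟩ | ⟨i, j, hadj, rfl⟩)
    · exact Or.inl (Or.inl ⟨i, rfl⟩)
    · exact Or.inl (Or.inr ⟨⟨i, j⟩, hadj, (eform_false_eq i j).symm⟩)
    · exact Or.inr ⟨⟨i, j⟩, hadj, (eform_true_eq i j).symm⟩

lemma pr_mem_signedArr (G : SignedGraph V) (i : V) : pr K i ∈ signedArr K G := by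
  rw [mem_signedArr_iff]; exact Or.inl ⟨i, rfl⟩

lemma eform_mem_signedArr {G : SignedGraph V} {η : Bool} {i j : V}
    (hadj : G.EdgeAdj η i j) : eform K η i j ∈ signedArr K G := by
  rw [mem_signedArr_iff]
  cases η
  · exact Or.inr (Or.inl ⟨i, j, hadj, rfl⟩)
  · exact Or.inr (Or.inr ⟨i, j, hadj, rfl⟩)

section Lattice

variable {M : Type} [AddCommGroup M] [Module K M] (H : Finset (Submodule K M))

lemma mem_interLattice_iff (z : Submodule K M) :
    z ∈ interLattice K H ↔ ∃ B ⊆ H, z = B.inf id := by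
  simp only [interLattice, Finset.mem_image, Finset.mem_powerset]
  constructor
  · rintro ⟨B, hB, rfl⟩; exact ⟨B, hB, rfl⟩
  · rintro ⟨B, hB, rfl⟩; exact ⟨B, hB, rfl⟩

lemma inf_mem_interLattice {B : Finset (Submodule K M)} (hB : B ⊆ H) :
    B.inf id ∈ interLattice K H :=
  (mem_interLattice_iff H _).2 ⟨B, hB, rfl⟩

lemma top_mem_interLattice : ⊤ ∈ interLattice K H :=
  (mem_interLattice_iff H _).2 ⟨∅, Finset.empty_subset _, by simp⟩

lemma hyperplane_mem_interLattice {h : Submodule K M} (hh : h ∈ H) :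
    h ∈ interLattice K H :=
  (mem_interLattice_iff H _).2 ⟨{h}, Finset.singleton_subset_iff.2 hh, by simp⟩

lemma inf_mem_interLattice' {a b : Submodule K M} (ha : a ∈ interLattice K H)
    (hb : b ∈ interLattice K H) : a ⊓ b ∈ interLattice K H := by
  rw [mem_interLattice_iff] at ha hb ⊢
  obtain ⟨B1, hB1, rfl⟩ := ha
  obtain ⟨B2, hB2, rfl⟩ := hb
  exact ⟨B1 ∪ B2, Finset.union_subset hB1 hB2, (Finset.inf_union ..).symm⟩

lemma latticeMeet_interLattice_eq (x y : Submodule K M) :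
    latticeMeet K (interLattice K H) x y =
      (H.filter fun z => x ≤ z ∧ y ≤ z).inf id := by
  apply le_antisymm
  · apply Finset.inf_le
    rw [Finset.mem_filter]
    refine ⟨inf_mem_interLattice H (Finset.filter_subset _ _), ?_, ?_⟩
    · exact Finset.le_inf fun z hz => (Finset.mem_filter.1 hz).2.1
    · exact Finset.le_inf fun z hz => (Finset.mem_filter.1 hz).2.2
  · apply Finset.le_inf
    intro z hz
    rw [Finset.mem_filter] at hz
    obtain ⟨hzL, hxz, hyz⟩ := hz
    obtain ⟨B, hB, rfl⟩ := (mem_interLattice_iff H _).1 hzL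
    apply Finset.le_inf
    intro h hhB
    refine Finset.inf_le_of_le (Finset.mem_filter.2 ⟨hB hhB, ?_, ?_⟩) (le_refl _)
    · exact le_trans hxz (Finset.inf_le hhB)
    · exact le_trans hyz (Finset.inf_le hhB)

lemma le_latticeMeet_interLattice {x y z : Submodule K M} (hz : z ∈ interLattice K H)
    (hx : x ≤ z) (hy : y ≤ z) : latticeMeet K (interLattice K H) x y ≤ z :=
  Finset.inf_le (Finset.mem_filter.2 ⟨hz, hx, hy⟩)

lemma mem_latticeMeet_interLattice {x y : Submodule K M} {v : M} :
    v ∈ latticeMeet K (interLattice K H) x y ↔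
      ∀ h ∈ H, x ≤ h → y ≤ h → v ∈ h := by
  rw [latticeMeet_interLattice_eq]
  rw [Submodule.mem_finsetInf]
  constructor
  · intro hv h hh hx hy
    exact hv h (Finset.mem_filter.2 ⟨hh, hx, hy⟩)
  · intro hv h hh
    rw [Finset.mem_filter] at hh
    exact hv h hh.1 hh.2.1 hh.2.2

end Lattice

end SSol
namespace SSol
set_option linter.unusedSectionVars false
set_option maxHeartbeats 1000000
variable {K : Type} [Field K] [CharZero K] {V : Type} [Fintype V]

lemma EdgeAdj_symm {G : SignedGraph V} {η : Bool} {u w : V} (h : G.EdgeAdj η u w) :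
    G.EdgeAdj η w u := by
  cases η
  · exact SimpleGraph.Adj.symm h
  · exact SimpleGraph.Adj.symm h

lemma EdgeAdj_ne {G : SignedGraph V} {η : Bool} {u w : V} (h : G.EdgeAdj η u w) :
    u ≠ w := by
  cases η
  · exact SimpleGraph.Adj.ne h
  · exact SimpleGraph.Adj.ne h

/-- An edge of `G` whose hyperplane belongs to `B`. -/
def EdgeIn (K : Type) [Field K] {V : Type} [Fintype V] (G : SignedGraph V)
    (B : Finset (Submodule K (V → K))) (u w : V) (η : Bool) : Prop :=
  G.EdgeAdj η u w ∧ LinearMap.ker (eform K η u w) ∈ B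

lemma EdgeIn.symm {G : SignedGraph V} {B : Finset (Submodule K (V → K))} {u w : V} {η : Bool}
    (h : EdgeIn K G B u w η) : EdgeIn K G B w u η :=
  ⟨EdgeAdj_symm h.1, by rw [← ker_eform_symm]; exact h.2⟩

/-- Reachability via edges whose hyperplanes lie in `B`, tracking sign. -/
inductive Reach (K : Type) [Field K] {V : Type} [Fintype V] (G : SignedGraph V)
    (B : Finset (Submodule K (V → K))) : V → V → Bool → Prop
  | refl (i : V) : Reach K G B i i false
  | tail {i u w : V} {ρ η : Bool} : Reach K G B i u ρ → EdgeIn K G B u w η →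
      Reach K G B i w (xor ρ η)

lemma Reach.single {G : SignedGraph V} {B : Finset (Submodule K (V → K))} {u w : V} {η : Bool}
    (h : EdgeIn K G B u w η) : Reach K G B u w η := by
  have := Reach.tail (Reach.refl (K := K) (G := G) (B := B) u) h
  simpa using this

lemma Reach.trans {G : SignedGraph V} {B : Finset (Submodule K (V → K))} {i j l : V}
    {ρ η : Bool} (h1 : Reach K G B i j ρ) (h2 : Reach K G B j l η) :
    Reach K G B i l (xor ρ η) := by
  induction h2 with
  | refl => simpa using h1
  | tail h e ih =>
      have := Reach.tail ih e
      rwa [Bool.xor_assoc] at this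

lemma Reach.symm {G : SignedGraph V} {B : Finset (Submodule K (V → K))} {i j : V} {ρ : Bool}
    (h : Reach K G B i j ρ) : Reach K G B j i ρ := by
  induction h with
  | refl => exact Reach.refl _
  | @tail u w ρ' η h e ih =>
      have := Reach.trans (Reach.single e.symm) ih
      rwa [Bool.xor_comm] at this

/-- Vertex forced to be zero on the flat determined by `B`. -/
def ZeroAt (K : Type) [Field K] {V : Type} [Fintype V] (G : SignedGraph V)
    (B : Finset (Submodule K (V → K))) (i : V) : Prop :=
  Reach K G B i i true ∨ ∃ u ρ, Reach K G B i u ρ ∧ LinearMap.ker (pr K u) ∈ B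

lemma reach_sound {G : SignedGraph V} {B : Finset (Submodule K (V → K))} {i j : V} {ρ : Bool}
    (h : Reach K G B i j ρ) : B.inf id ≤ LinearMap.ker (eform K ρ i j) := by
  induction h with
  | refl => rw [ker_eform_self_false]; exact le_top
  | @tail u w ρ' η h e ih =>
      have h2 : B.inf id ≤ LinearMap.ker (eform K η u w) := Finset.inf_le e.2
      exact le_trans (le_inf ih h2) (ker_eform_comp ..)

lemma zeroAt_sound {G : SignedGraph V} {B : Finset (Submodule K (V → K))} {i : V}
    (h : ZeroAt K G B i) : B.inf id ≤ LinearMap.ker (pr K i) := by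
  rcases h with h | ⟨u, ρ, hr, hu⟩
  · rw [← ker_eform_self_true]; exact reach_sound h
  · exact le_trans (le_inf (reach_sound hr) (Finset.inf_le hu)) (ker_pr_inf_le ..)

lemma reach_unique {G : SignedGraph V} {B : Finset (Submodule K (V → K))} {i v : V}
    {ρ ρ' : Bool} (hz : ¬ ZeroAt K G B i) (h1 : Reach K G B i v ρ)
    (h2 : Reach K G B i v ρ') : ρ = ρ' := by
  by_contra hne
  apply hz
  left
  have := Reach.trans h1 h2.symm
  have hx : xor ρ ρ' = true := by
    cases ρ <;> cases ρ' <;> simp_all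
  rwa [hx] at this

/-- The witness vector for completeness. -/
noncomputable def rwitness (K : Type) [Field K] {V : Type} [Fintype V] (G : SignedGraph V)
    (B : Finset (Submodule K (V → K))) (i : V) : V → K := fun v =>
  if Reach K G B i v false then 1 else if Reach K G B i v true then -1 else 0

/-- classification hypothesis for members of `B` -/
def BCls (K : Type) [Field K] {V : Type} [Fintype V] (G : SignedGraph V)
    (B : Finset (Submodule K (V → K))) : Prop :=
  ∀ h ∈ B, (∃ u, h = LinearMap.ker (pr K u)) ∨
    ∃ u w η, G.EdgeAdj η u w ∧ h = LinearMap.ker (eform K η u w)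

lemma rwitness_val {G : SignedGraph V} {B : Finset (Submodule K (V → K))} {i v : V}
    {ρ : Bool} (hz : ¬ ZeroAt K G B i) (h : Reach K G B i v ρ) :
    rwitness K G B i v = sgn K ρ := by
  unfold rwitness
  cases ρ
  · rw [if_pos h, sgn_false]
  · rw [if_neg, if_pos h, sgn_true]
    intro hf
    exact Bool.noConfusion (reach_unique hz hf h)

lemma rwitness_val_zero {G : SignedGraph V} {B : Finset (Submodule K (V → K))} {i v : V}
    (h : ∀ ρ, ¬ Reach K G B i v ρ) : rwitness K G B i v = 0 := by
  unfold rwitness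
  rw [if_neg (h false), if_neg (h true)]

lemma rwitness_mem {G : SignedGraph V} {B : Finset (Submodule K (V → K))} {i : V}
    (hcls : BCls K G B) (hz : ¬ ZeroAt K G B i) : rwitness K G B i ∈ B.inf id := by
  rw [Submodule.mem_finsetInf]
  intro h hh
  rcases hcls h hh with ⟨u, rfl⟩ | ⟨u, w, η, hadj, rfl⟩
  · simp only [id_eq]
    have hnr : ∀ ρ, ¬ Reach K G B i u ρ := by
      intro ρ hr
      exact hz (Or.inr ⟨u, ρ, hr, hh⟩)
    rw [LinearMap.mem_ker]
    exact rwitness_val_zero hnr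
  · simp only [id_eq]
    rw [mem_ker_eform]
    have hedge : EdgeIn K G B u w η := ⟨hadj, hh⟩
    by_cases hu : ∃ ρ, Reach K G B i u ρ
    · obtain ⟨ρ, hru⟩ := hu
      have hrw : Reach K G B i w (xor ρ η) := Reach.tail hru hedge
      rw [rwitness_val hz hru, rwitness_val hz hrw, sgn_xor, ← mul_assoc,
        mul_comm (sgn K η) (sgn K ρ), mul_assoc, sgn_mul_self, mul_one]
    · push_neg at hu
      have hw : ∀ ρ, ¬ Reach K G B i w ρ := by
        intro ρ hrw
        exact hu (xor ρ η) (Reach.tail hrw hedge.symm)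
      rw [rwitness_val_zero hu, rwitness_val_zero hw, mul_zero]

lemma rwitness_self {G : SignedGraph V} {B : Finset (Submodule K (V → K))} {i : V}
    (hz : ¬ ZeroAt K G B i) : rwitness K G B i i = 1 := by
  have := rwitness_val hz (Reach.refl (K := K) (G := G) (B := B) i)
  rwa [sgn_false] at this

/-- Completeness for vertex forms. -/
lemma complete_vertex {G : SignedGraph V} {B : Finset (Submodule K (V → K))} {i : V}
    (hcls : BCls K G B) (hle : B.inf id ≤ LinearMap.ker (pr K i)) : ZeroAt K G B i := by
  by_contra hz
  have hm := rwitness_mem hcls hz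
  have := hle hm
  rw [LinearMap.mem_ker] at this
  have hv : rwitness K G B i i = 0 := this
  rw [rwitness_self hz] at hv
  exact one_ne_zero hv

/-- Completeness for edge forms. -/
lemma complete_edge {G : SignedGraph V} {B : Finset (Submodule K (V → K))} {i j : V}
    {d : Bool} (hcls : BCls K G B) (hij : i ≠ j)
    (hle : B.inf id ≤ LinearMap.ker (eform K d i j)) :
    Reach K G B i j d ∨ ZeroAt K G B i := by
  by_cases hz : ZeroAt K G B i
  · exact Or.inr hz
  left
  by_contra hr
  have hm := rwitness_mem hcls hz
  have heq := mem_ker_eform.1 (hle hm)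
  rw [rwitness_self hz] at heq
  by_cases hj : ∃ ρ, Reach K G B i j ρ
  · obtain ⟨ρ, hrj⟩ := hj
    have hρ : ρ ≠ d := fun hc => hr (hc ▸ hrj)
    rw [rwitness_val hz hrj] at heq
    cases d <;> cases ρ <;> simp_all <;> norm_num at heq
  · push_neg at hj
    rw [rwitness_val_zero hj, mul_zero] at heq
    exact one_ne_zero heq

end SSol
namespace SSol
set_option linter.unusedSectionVars false
set_option linter.unusedVariables false
set_option maxHeartbeats 1000000
variable {K : Type} [Field K] [CharZero K] {V : Type} [Fintype V]

/-- a walk in the signed graph -/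
def IsWalk (G : SignedGraph V) (r : ℕ) (w : ℕ → V) (sg : ℕ → Bool) : Prop :=
  ∀ i, i < r → G.EdgeAdj (sg i) (w i) (w (i + 1))

/-- the potential (cumulative sign) along a walk -/
def pot (sg : ℕ → Bool) : ℕ → Bool
  | 0 => false
  | (i + 1) => xor (pot sg i) (sg i)

lemma pot_zero (sg : ℕ → Bool) : pot sg 0 = false := rfl

lemma pot_succ (sg : ℕ → Bool) (i : ℕ) : pot sg (i + 1) = xor (pot sg i) (sg i) := rfl

lemma pot_congr {sg sg' : ℕ → Bool} :
    ∀ {i}, (∀ j, j < i → sg j = sg' j) → pot sg i = pot sg' i := by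
  intro i
  induction i with
  | zero => intro _; rfl
  | succ n ih =>
      intro hsg
      rw [pot_succ, pot_succ, ih fun j hj => hsg j (by omega), hsg n (by omega)]

lemma xor_pot_succ (sg : ℕ → Bool) (i : ℕ) :
    xor (pot sg i) (pot sg (i + 1)) = sg i := by
  rw [pot_succ]
  cases pot sg i <;> cases sg i <;> rfl

section CL

variable (G : SignedGraph V) (e : Fin (Fintype.card V) ≃ V) (k : ℕ)

/-- index of a vertex in the ordering -/
def vidx (e : Fin (Fintype.card V) ≃ V) (v : V) : ℕ := (e.symm v : ℕ)

/-- the relation of `S_k`-internal edges between positions of the walk -/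
def CLrel (r : ℕ) (w : ℕ → V) (sg : ℕ → Bool) : ℕ → ℕ → Prop := fun p q =>
  p ≤ r ∧ q ≤ r ∧ vidx e (w p) < k ∧ vidx e (w q) < k ∧
    G.EdgeAdj (xor (pot sg p) (pot sg q)) (w p) (w q)

/-- conclusion of the combinatorial lemma -/
def CLout (r : ℕ) (w : ℕ → V) (sg : ℕ → Bool) : Prop :=
  (∃ p q, p ≤ r ∧ q ≤ r ∧ w p = w q ∧ pot sg p ≠ pot sg q) ∨
  (∃ p q, p ≤ r ∧ q ≤ r ∧ w p = w 0 ∧ pot sg p = pot sg 0 ∧ w q = w r ∧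
    pot sg q = pot sg r ∧ Relation.ReflTransGen (CLrel G e k r w sg) p q)

lemma relchain {Rel : ℕ → ℕ → Prop} {r : ℕ} (h : ∀ i, i < r → Rel i (i + 1)) :
    Relation.ReflTransGen Rel 0 r := by
  induction r with
  | zero => exact Relation.ReflTransGen.refl
  | succ n ih =>
      exact Relation.ReflTransGen.tail (ih fun i hi => h i (by omega)) (h n (by omega))

lemma CLlift {r r' : ℕ} {w : ℕ → V} {sg sg' : ℕ → Bool} (ι : ℕ → ℕ)
    (hι : ∀ i, i ≤ r' → ι i ≤ r)
    (hpι : ∀ i, i ≤ r' → pot sg' i = pot sg (ι i))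
    (h0v : w (ι 0) = w 0) (h0p : pot sg (ι 0) = pot sg 0)
    (hrv : w (ι r') = w r) (hrp : pot sg (ι r') = pot sg r)
    (h : CLout G e k r' (fun i => w (ι i)) sg') : CLout G e k r w sg := by
  rcases h with ⟨p, q, hp, hq, hv, hpot⟩ | ⟨p, q, hp, hq, hv0, hp0, hvr, hpr, hchain⟩
  · left
    refine ⟨ι p, ι q, hι p hp, hι q hq, hv, ?_⟩
    rw [← hpι p hp, ← hpι q hq]; exact hpot
  · right
    refine ⟨ι p, ι q, hι p hp, hι q hq, ?_, ?_, ?_, ?_, ?_⟩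
    · rw [show w (ι p) = w (ι 0) from hv0, h0v]
    · rw [← hpι p hp, hp0, hpι 0 (by omega), h0p]
    · rw [show w (ι q) = w (ι r') from hvr, hrv]
    · rw [← hpι q hq, hpr, hpι r' (le_refl _), hrp]
    · refine Relation.ReflTransGen.lift ι ?_ _ _ hchain
      rintro a b ⟨ha, hb, hka, hkb, hadj⟩
      refine ⟨hι a ha, hι b hb, hka, hkb, ?_⟩
      rwa [← hpι a ha, ← hpι b hb]

lemma bool_even_cond {s s' s'' : Bool}
    (h : Even ((cond s 1 0 + cond s' 1 0 + cond s'' 1 0 : ℕ))) : s'' = xor s s' := by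
  cases s <;> cases s' <;> cases s'' <;> revert h <;> decide

lemma induce_edgeAdj_iff (G : SignedGraph V) (W : Set V) (s : Bool) (a b : W) :
    (G.induce W).EdgeAdj s a b ↔ G.EdgeAdj s (a : V) (b : V) := by
  cases s
  · exact SimpleGraph.comap_adj
  · exact SimpleGraph.comap_adj

/-- The combinatorial heart: a walk with endpoints in `S_k` yields either an unbalanced pair
or a chain of `S_k`-internal edges among its vertices. -/
theorem CLmain
    (hLE : ∀ i : Fin (Fintype.card V),
      (G.induce {v : V | ∃ j, j ≤ i ∧ e j = v}).LinkSimplicial ⟨e i, ⟨i, le_refl i, rfl⟩⟩) :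
    ∀ (r : ℕ) (w : ℕ → V) (sg : ℕ → Bool), IsWalk G r w sg →
      vidx e (w 0) < k → vidx e (w r) < k → CLout G e k r w sg := by
  intro r
  induction r using Nat.strong_induction_on with
  | _ r IH =>
  intro w sg hw h0 hr
  obtain ⟨P, hPmem, hPmax⟩ := (Finset.range (r + 1)).exists_max_image
    (fun p => vidx e (w p)) ⟨0, by simp⟩
  rw [Finset.mem_range] at hPmem
  have hPle : P ≤ r := by omega
  have hPmax' : ∀ q, q ≤ r → vidx e (w q) ≤ vidx e (w P) := fun q hq =>
    hPmax q (Finset.mem_range.2 (by omega))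
  by_cases hkP : vidx e (w P) < k
  · -- all vertices lie in S_k: the walk itself is the chain
    right
    refine ⟨0, r, by omega, le_refl r, rfl, rfl, rfl, rfl, relchain ?_⟩
    intro i hi
    refine ⟨by omega, by omega, ?_, ?_, ?_⟩
    · exact lt_of_le_of_lt (hPmax' i (by omega)) hkP
    · exact lt_of_le_of_lt (hPmax' (i + 1) (by omega)) hkP
    · rw [xor_pot_succ]; exact hw i hi
  · -- the latest vertex is outside S_k, hence an interior vertex of the walk
    have hP0 : P ≠ 0 := fun hc => hkP (hc ▸ h0)
    have hPr : P ≠ r := fun hc => hkP (hc ▸ hr)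
    have h1P : 1 ≤ P := by omega
    have hPr1 : P + 1 ≤ r := by omega
    have hPm1 : P - 1 + 1 = P := by omega
    by_cases hbt : w (P - 1) = w (P + 1)
    · by_cases hsg : sg (P - 1) = sg P
      · -- backtracking with equal signs: excise two steps
        have hcancel : pot sg (P + 1) = pot sg (P - 1) := by
          rw [pot_succ, show P = P - 1 + 1 from hPm1.symm, pot_succ, hPm1, ← hsg]
          cases pot sg (P - 1) <;> cases sg (P - 1) <;> rfl
        set ι : ℕ → ℕ := fun i => if i < P - 1 then i else i + 2 with hιdef
        set sg' : ℕ → Bool := fun i => if i < P - 1 then sg i else sg (i + 2) with hsg'def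
        have hιlt : ∀ i, i < P - 1 → ι i = i := fun i hi => if_pos hi
        have hιge : ∀ i, ¬ (i < P - 1) → ι i = i + 2 := fun i hi => if_neg hi
        have hwalk' : IsWalk G (r - 2) (fun i => w (ι i)) sg' := by
          intro i hi
          show G.EdgeAdj (if i < P - 1 then sg i else sg (i + 2)) (w (ι i)) (w (ι (i + 1)))
          by_cases hc : i + 1 < P - 1
          · rw [hιlt i (by omega), hιlt (i+1) hc, if_pos (by omega)]
            exact hw i (by omega)
          · by_cases hc2 : i < P - 1
            · -- i + 1 = P - 1
              have hie : i + 1 = P - 1 := by omega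
              rw [hιlt i hc2, hιge (i+1) hc, if_pos hc2]
              have : w (i + 1 + 2) = w (i + 1) := by
                rw [show i + 1 + 2 = P + 1 by omega, ← hbt, hie]
              rw [this]
              exact hw i (by omega)
            · rw [hιge i hc2, hιge (i+1) hc, if_neg hc2,
                show i + 1 + 2 = i + 2 + 1 by omega]
              exact hw (i + 2) (by omega)
        have hpι : ∀ i, pot sg' i = pot sg (ι i) := by
          intro i
          induction i with
          | zero =>
              by_cases hc : 0 < P - 1
              · rw [hιlt 0 hc]; rfl
              · rw [hιge 0 hc, show (0:ℕ) + 2 = P + 1 by omega, hcancel,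
                  show P - 1 = 0 by omega]
                rfl
          | succ n ih =>
              rw [pot_succ, ih]
              by_cases hc : n + 1 < P - 1
              · rw [hιlt (n+1) hc, hιlt n (by omega), pot_succ]
                show _ = xor (pot sg n) (sg n)
                congr 1
                show (if n < P - 1 then sg n else sg (n + 2)) = sg n
                rw [if_pos (by omega)]
              · by_cases hc2 : n < P - 1
                · -- n + 1 = P - 1
                  have hie : n + 1 = P - 1 := by omega
                  rw [hιge (n+1) hc, hιlt n hc2, show n + 1 + 2 = P + 1 by omega, hcancel,
                    ← hie, pot_succ]
                  congr 1
                  show (if n < P - 1 then sg n else sg (n + 2)) = sg n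
                  rw [if_pos hc2]
                · rw [hιge (n+1) hc, hιge n hc2, show n + 1 + 2 = n + 2 + 1 by omega,
                    pot_succ]
                  congr 1
                  show (if n < P - 1 then sg n else sg (n + 2)) = sg (n + 2)
                  rw [if_neg hc2]
        have hι0v : w (ι 0) = w 0 := by
          by_cases hc : 0 < P - 1
          · rw [hιlt 0 hc]
          · rw [hιge 0 hc, show (0:ℕ) + 2 = P + 1 by omega, ← hbt, show P - 1 = 0 by omega]
        have hιrv : ι (r - 2) = r := by rw [hιge (r-2) (by omega)]; omega
        have h0' : vidx e (w (ι 0)) < k := by rwa [hι0v]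
        have hr' : vidx e (w (ι (r - 2))) < k := by rwa [hιrv]
        have := IH (r - 2) (by omega) (fun i => w (ι i)) sg' hwalk' h0' hr'
        refine CLlift G e k ι ?_ (fun i _ => hpι i) hι0v (by rw [← hpι 0]; rfl)
          (by rw [hιrv]) (by rw [hιrv]) this
        intro i hi
        by_cases hc : i < P - 1
        · rw [hιlt i hc]; omega
        · rw [hιge i hc]; omega
      · -- backtracking with different signs: unbalanced
        left
        refine ⟨P - 1, P + 1, by omega, by omega, hbt, ?_⟩
        have e1 : pot sg P = xor (pot sg (P - 1)) (sg (P - 1)) := by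
          rw [show P = P - 1 + 1 from hPm1.symm, pot_succ, hPm1]
        have e2 : pot sg (P + 1) = xor (pot sg P) (sg P) := pot_succ sg P
        rw [e2, e1]
        intro hc
        apply hsg
        cases hp : pot sg (P - 1) <;> rw [hp] at hc <;>
          cases h1 : sg (P - 1) <;> rw [h1] at hc <;>
          cases h2 : sg P <;> rw [h2] at hc <;> first | rfl | (exact absurd hc (by decide))
    · -- genuine interior vertex: use link simpliciality to shortcut
      set z := w P with hzdef
      set i0 : Fin (Fintype.card V) := e.symm z with hi0def
      have hzi0 : e i0 = z := e.apply_symm_apply z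
      have hmem : ∀ q, q ≤ r → w q ∈ {v : V | ∃ j, j ≤ i0 ∧ e j = v} := by
        intro q hq
        refine ⟨e.symm (w q), ?_, e.apply_symm_apply _⟩
        rw [Fin.le_def]
        exact hPmax' q hq
      have hadj1 : G.EdgeAdj (sg (P - 1)) (w (P - 1)) z := by
        have := hw (P - 1) (by omega)
        rwa [hPm1] at this
      have hadj2 : G.EdgeAdj (sg P) z (w (P + 1)) := hw P (by omega)
      have hne : w (P - 1) ≠ w (P + 1) := hbt
      -- apply link simpliciality in the induced subgraph
      have hLS := hLE i0
      set W : Set V := {v : V | ∃ j, j ≤ i0 ∧ e j = v} with hWdef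
      have hm1 : w (P - 1) ∈ W := hmem (P - 1) (by omega)
      have hp1 : w (P + 1) ∈ W := hmem (P + 1) (by omega)
      have hadj1' : (G.induce W).EdgeAdj (sg (P - 1)) ⟨e i0, ⟨i0, le_refl i0, rfl⟩⟩
          ⟨w (P - 1), hm1⟩ := by
        rw [induce_edgeAdj_iff]
        show G.EdgeAdj (sg (P - 1)) (e i0) (w (P - 1))
        rw [hzi0]
        exact EdgeAdj_symm hadj1
      have hadj2' : (G.induce W).EdgeAdj (sg P) ⟨e i0, ⟨i0, le_refl i0, rfl⟩⟩
          ⟨w (P + 1), hp1⟩ := by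
        rw [induce_edgeAdj_iff]
        show G.EdgeAdj (sg P) (e i0) (w (P + 1))
        rw [hzi0]
        exact hadj2
      obtain ⟨s'', hadj'', heven⟩ := hLS ⟨w (P - 1), hm1⟩ ⟨w (P + 1), hp1⟩
        (sg (P - 1)) (sg P) (by simp [Subtype.ext_iff]; exact hne) hadj1' hadj2'
      have hs'' : s'' = xor (sg (P - 1)) (sg P) := bool_even_cond heven
      have hadjG : G.EdgeAdj s'' (w (P - 1)) (w (P + 1)) := by
        cases hs : s''
        · rw [hs] at hadj''; exact hadj''
        · rw [hs] at hadj''; exact hadj''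
      -- excise position P
      set ι : ℕ → ℕ := fun i => if i < P then i else i + 1 with hιdef
      set sg' : ℕ → Bool := fun i =>
        if i < P - 1 then sg i else if i = P - 1 then s'' else sg (i + 1) with hsg'def
      have hιlt : ∀ i, i < P → ι i = i := fun i hi => if_pos hi
      have hιge : ∀ i, ¬ (i < P) → ι i = i + 1 := fun i hi => if_neg hi
      have hwalk' : IsWalk G (r - 1) (fun i => w (ι i)) sg' := by
        intro i hi
        show G.EdgeAdj (if i < P - 1 then sg i else if i = P - 1 then s'' else sg (i + 1))
          (w (ι i)) (w (ι (i + 1)))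
        by_cases hc : i + 1 < P
        · rw [hιlt i (by omega), hιlt (i+1) hc, if_pos (by omega)]
          exact hw i (by omega)
        · by_cases hc2 : i < P
          · -- i = P - 1
            have hie : i = P - 1 := by omega
            rw [hιlt i hc2, hιge (i+1) hc, if_neg (by omega), if_pos hie, hie,
              show P - 1 + 1 + 1 = P + 1 by omega]
            exact hadjG
          · rw [hιge i hc2, hιge (i+1) hc, if_neg (by omega), if_neg (by omega)]
            exact hw (i + 1) (by omega)
      have hcancel2 : pot sg (P + 1) = xor (pot sg (P - 1)) s'' := by
        rw [pot_succ, show P = P - 1 + 1 from hPm1.symm, pot_succ, hPm1, hs'']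
        cases pot sg (P - 1) <;> cases sg (P - 1) <;> cases sg P <;> rfl
      have hpι : ∀ i, pot sg' i = pot sg (ι i) := by
        intro i
        induction i with
        | zero => rw [hιlt 0 (by omega)]; rfl
        | succ n ih =>
            rw [pot_succ, ih]
            by_cases hc : n + 1 < P
            · rw [hιlt (n+1) hc, hιlt n (by omega), pot_succ]
              congr 1
              show (if n < P - 1 then sg n else if n = P - 1 then s'' else sg (n + 1)) = sg n
              rw [if_pos (by omega)]
            · by_cases hc2 : n < P
              · -- n = P - 1
                have hie : n = P - 1 := by omega
                rw [hιge (n+1) hc, hιlt n hc2, show n + 1 + 1 = P + 1 by omega, hcancel2,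
                  hie]
                congr 1
                show (if P - 1 < P - 1 then sg (P-1) else if P - 1 = P - 1 then s''
                  else sg (P - 1 + 1)) = s''
                rw [if_neg (by omega), if_pos rfl]
              · rw [hιge (n+1) hc, hιge n hc2, show n + 1 + 1 = n + 1 + 1 from rfl,
                  pot_succ]
                congr 1
                show (if n < P - 1 then sg n else if n = P - 1 then s'' else sg (n + 1))
                  = sg (n + 1)
                rw [if_neg (by omega), if_neg (by omega)]
      have hι0v : ι 0 = 0 := hιlt 0 (by omega)
      have hιrv : ι (r - 1) = r := by rw [hιge (r-1) (by omega)]; omega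
      have h0' : vidx e (w (ι 0)) < k := by rwa [hι0v]
      have hr' : vidx e (w (ι (r - 1))) < k := by rwa [hιrv]
      have := IH (r - 1) (by omega) (fun i => w (ι i)) sg' hwalk' h0' hr'
      refine CLlift G e k ι ?_ (fun i _ => hpι i) (by rw [hι0v]) (by rw [hι0v])
        (by rw [hιrv]) (by rw [hιrv]) this
      intro i hi
      by_cases hc : i < P
      · rw [hιlt i hc]; omega
      · rw [hιge i hc]; omega

end CL
end SSol
namespace SSol
set_option linter.unusedSectionVars false
set_option linter.unusedVariables false
set_option maxHeartbeats 1000000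
variable {K : Type} [Field K] [CharZero K] {V : Type} [Fintype V]

section Mflat

variable (K) (e : Fin (Fintype.card V) ≃ V) (k : ℕ)

/-- the hyperplanes of the first `k` coordinates -/
noncomputable def Bflat : Finset (Submodule K (V → K)) :=
  (Finset.univ.filter fun v : V => vidx e v < k).image fun v => LinearMap.ker (pr K v)

/-- the flat where the first `k` coordinates vanish -/
noncomputable def mflat : Submodule K (V → K) := (Bflat K e k).inf id

variable {K e k}

lemma mem_Bflat {h : Submodule K (V → K)} :
    h ∈ Bflat K e k ↔ ∃ v, vidx e v < k ∧ h = LinearMap.ker (pr K v) := by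
  simp only [Bflat, Finset.mem_image, Finset.mem_filter, Finset.mem_univ, true_and]
  constructor
  · rintro ⟨v, hv, rfl⟩; exact ⟨v, hv, rfl⟩
  · rintro ⟨v, hv, rfl⟩; exact ⟨v, hv, rfl⟩

lemma mem_mflat {x : V → K} : x ∈ mflat K e k ↔ ∀ v, vidx e v < k → x v = 0 := by
  rw [mflat, Submodule.mem_finsetInf]
  constructor
  · intro hx v hv
    exact hx _ (mem_Bflat.2 ⟨v, hv, rfl⟩) 
  · intro hx h hh
    obtain ⟨v, hv, rfl⟩ := mem_Bflat.1 hh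
    exact hx v hv

lemma mflat_le_ker_pr {v : V} (hv : vidx e v < k) :
    mflat K e k ≤ LinearMap.ker (pr K v) := by
  intro x hx
  exact mem_mflat.1 hx v hv

lemma mflat_le_ker_eform {η : Bool} {u v : V} (hu : vidx e u < k) (hv : vidx e v < k) :
    mflat K e k ≤ LinearMap.ker (eform K η u v) :=
  le_trans (le_inf (mflat_le_ker_pr hu) (mflat_le_ker_pr hv)) (ker_pr_le_eform ..)

lemma mflat_antitone {k k' : ℕ} (hk : k ≤ k') : mflat K e k' ≤ mflat K e k := by
  apply Finset.inf_mono
  intro h hh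
  obtain ⟨v, hv, rfl⟩ := mem_Bflat.1 hh
  exact mem_Bflat.2 ⟨v, by omega, rfl⟩

lemma mflat_eq_ker_funLeft :
    mflat K e k = LinearMap.ker
      (LinearMap.funLeft K K (Subtype.val : {v : V // vidx e v < k} → V)) := by
  ext x
  rw [mem_mflat, LinearMap.mem_ker]
  constructor
  · intro hx
    funext t
    exact hx t.1 t.2
  · intro hx v hv
    exact congrFun hx ⟨v, hv⟩

lemma card_subtype_vidx (hk : k ≤ Fintype.card V) :
    Fintype.card {v : V // vidx e v < k} = k := by
  have h1 : {v : V // vidx e v < k} ≃ {j : Fin (Fintype.card V) // (j : ℕ) < k} :=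
    (Equiv.subtypeEquiv e.symm (fun v => Iff.rfl))
  have h2 : {j : Fin (Fintype.card V) // (j : ℕ) < k} ≃ Fin k :=
    { toFun := fun x => ⟨x.1, x.2⟩
      invFun := fun y => ⟨⟨y.1, lt_of_lt_of_le y.2 hk⟩, y.2⟩
      left_inv := fun x => by ext; rfl
      right_inv := fun y => by ext; rfl }
  rw [Fintype.card_congr (h1.trans h2), Fintype.card_fin]

lemma finrank_mflat (hk : k ≤ Fintype.card V) :
    Module.finrank K (mflat K e k) = Fintype.card V - k := by
  rw [mflat_eq_ker_funLeft]
  set Φ := LinearMap.funLeft K K (Subtype.val : {v : V // vidx e v < k} → V) with hΦ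
  have hsurj : Function.Surjective Φ :=
    LinearMap.funLeft_surjective_of_injective K K _ Subtype.val_injective
  have hrange : LinearMap.range Φ = ⊤ := LinearMap.range_eq_top.2 hsurj
  have := LinearMap.finrank_range_add_finrank_ker Φ
  rw [hrange] at this
  have htop : Module.finrank K (⊤ : Submodule K ({v : V // vidx e v < k} → K)) =
      Fintype.card {v : V // vidx e v < k} := by
    rw [finrank_top]
    rw [Module.finrank_pi]
  rw [htop, card_subtype_vidx hk] at this
  have hV : Module.finrank K (V → K) = Fintype.card V := by rw [Module.finrank_pi]
  rw [hV] at this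
  omega

end Mflat
end SSol
namespace SSol
set_option linter.unusedSectionVars false
set_option linter.unusedVariables false
set_option maxHeartbeats 1000000
variable {K : Type} [Field K] [CharZero K] {V : Type} [Fintype V]

lemma ker_pr_inf_le' (ρ : Bool) (u v : V) :
    LinearMap.ker (eform K ρ u v) ⊓ LinearMap.ker (pr K u) ≤ LinearMap.ker (pr K v) := by
  intro x hx
  rw [Submodule.mem_inf] at hx
  obtain ⟨h1, h2⟩ := hx
  rw [LinearMap.mem_ker] at h2 ⊢
  rw [mem_ker_eform] at h1
  simp only [LinearMap.proj_apply] at *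
  have := sgn_ne_zero (K := K) ρ
  rw [h2] at h1
  rcases mul_eq_zero.1 h1.symm with hc | hc
  · exact absurd hc this
  · exact hc

lemma ker_pr_inj {u v : V} (h : LinearMap.ker (pr K u) = LinearMap.ker (pr K v)) : u = v := by
  by_contra hne
  have hx : (Pi.single u 1 : V → K) ∈ LinearMap.ker (pr K v) := by
    rw [LinearMap.mem_ker]
    show (Pi.single u 1 : V → K) v = 0
    simp [Pi.single_apply, hne]
  rw [← h, LinearMap.mem_ker] at hx
  have : (Pi.single u 1 : V → K) u = 0 := hx
  simp [Pi.single_apply] at this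

lemma hyper_cases {G : SignedGraph V} {h : Submodule K (V → K)}
    (hh : h ∈ (signedArr K G).image LinearMap.ker) :
    (∃ u, h = LinearMap.ker (pr K u)) ∨
      ∃ u w η, G.EdgeAdj η u w ∧ h = LinearMap.ker (eform K η u w) := by
  obtain ⟨φ, hφ, rfl⟩ := Finset.mem_image.1 hh
  rcases (mem_signedArr_iff G φ).1 hφ with ⟨i, rfl⟩ | ⟨i, j, hadj, rfl⟩ | ⟨i, j, hadj, rfl⟩
  · exact Or.inl ⟨i, rfl⟩
  · exact Or.inr ⟨i, j, false, hadj, rfl⟩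
  · exact Or.inr ⟨i, j, true, hadj, rfl⟩

lemma reach_mono {G : SignedGraph V} {B B' : Finset (Submodule K (V → K))} {i j : V}
    {ρ : Bool} (hE : ∀ u w η, EdgeIn K G B' u w η → EdgeIn K G B u w η)
    (h : Reach K G B' i j ρ) : Reach K G B i j ρ := by
  induction h with
  | refl => exact Reach.refl _
  | @tail u w ρ' η h edge ih => exact Reach.tail ih (hE u w η edge)

/-- Extraction of a walk from a reachability certificate. -/
lemma reach_to_walk {G : SignedGraph V} {B : Finset (Submodule K (V → K))} {i j : V}
    {ρ : Bool} (h : Reach K G B i j ρ) :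
    ∃ r w sg, IsWalk G r w sg ∧ w 0 = i ∧ w r = j ∧ pot sg r = ρ ∧
      ∀ l, l < r → LinearMap.ker (eform K (sg l) (w l) (w (l + 1))) ∈ B := by
  induction h with
  | refl => exact ⟨0, fun _ => i, fun _ => false, fun l hl => absurd hl (by omega),
      rfl, rfl, rfl, fun l hl => absurd hl (by omega)⟩
  | @tail u wv ρ' η h edge ih =>
      obtain ⟨r, w, sg, hwalk, h0, hr, hpot, hker⟩ := ih
      refine ⟨r + 1, fun l => if l ≤ r then w l else wv,
        fun l => if l < r then sg l else η, ?_, ?_, ?_, ?_, ?_⟩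
      · intro l hl
        by_cases hc : l < r
        · simp only [if_pos hc, if_pos (by omega : l ≤ r), if_pos (by omega : l + 1 ≤ r)]
          exact hwalk l hc
        · have hlr : l = r := by omega
          subst hlr
          simp only [if_neg hc, if_pos (le_refl l), if_neg (by omega : ¬ l + 1 ≤ l)]
          rw [hr]
          exact edge.1
      · simp only [if_pos (by omega : (0:ℕ) ≤ r)]; exact h0
      · simp only [if_neg (by omega : ¬ r + 1 ≤ r)]
      · rw [pot_succ, if_neg (lt_irrefl r)]
        rw [pot_congr (sg' := sg) (fun l hl => by rw [if_pos hl]), hpot]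
      · intro l hl
        by_cases hc : l < r
        · simp only [if_pos hc, if_pos (by omega : l ≤ r), if_pos (by omega : l + 1 ≤ r)]
          exact hker l hc
        · have hlr : l = r := by omega
          subst hlr
          simp only [if_neg hc, if_pos (le_refl l), if_neg (by omega : ¬ l + 1 ≤ l)]
          rw [hr]
          exact edge.2

/-- Concatenation of two walks joined by an edge. -/
lemma concat_walk (G : SignedGraph V) {r1 r2 : ℕ} {w1 w2 : ℕ → V} {sg1 sg2 : ℕ → Bool}
    {d : Bool} (h1 : IsWalk G r1 w1 sg1) (h2 : IsWalk G r2 w2 sg2)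
    (hmid : G.EdgeAdj d (w1 r1) (w2 0)) :
    ∃ (w : ℕ → V) (sg : ℕ → Bool),
      IsWalk G (r1 + 1 + r2) w sg ∧ w 0 = w1 0 ∧ w (r1 + 1 + r2) = w2 r2 ∧
      pot sg (r1 + 1 + r2) = xor (xor (pot sg1 r1) d) (pot sg2 r2) ∧
      (∀ l, l < r1 + 1 + r2 →
        (l < r1 ∧ sg l = sg1 l ∧ w l = w1 l ∧ w (l + 1) = w1 (l + 1)) ∨
        (l = r1 ∧ sg l = d ∧ w l = w1 r1 ∧ w (l + 1) = w2 0) ∨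
        (r1 < l ∧ sg l = sg2 (l - (r1 + 1)) ∧ w l = w2 (l - (r1 + 1)) ∧
          w (l + 1) = w2 (l - (r1 + 1) + 1) ∧ l - (r1 + 1) < r2)) := by
  set w : ℕ → V := fun l => if l ≤ r1 then w1 l else w2 (l - (r1 + 1)) with hwdef
  set sg : ℕ → Bool := fun l =>
    if l < r1 then sg1 l else if l = r1 then d else sg2 (l - (r1 + 1)) with hsgdef
  have hdesc : ∀ l, l < r1 + 1 + r2 →
      (l < r1 ∧ sg l = sg1 l ∧ w l = w1 l ∧ w (l + 1) = w1 (l + 1)) ∨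
      (l = r1 ∧ sg l = d ∧ w l = w1 r1 ∧ w (l + 1) = w2 0) ∨
      (r1 < l ∧ sg l = sg2 (l - (r1 + 1)) ∧ w l = w2 (l - (r1 + 1)) ∧
        w (l + 1) = w2 (l - (r1 + 1) + 1) ∧ l - (r1 + 1) < r2) := by
    intro l hl
    rcases lt_trichotomy l r1 with hc | hc | hc
    · left
      refine ⟨hc, ?_, ?_, ?_⟩
      · show (if l < r1 then sg1 l else _) = sg1 l; rw [if_pos hc]
      · show (if l ≤ r1 then w1 l else _) = w1 l; rw [if_pos (by omega)]
      · show (if l + 1 ≤ r1 then w1 (l+1) else _) = w1 (l + 1); rw [if_pos (by omega)]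
    · right; left
      subst hc
      refine ⟨rfl, ?_, ?_, ?_⟩
      · show (if l < l then sg1 l else if l = l then d else _) = d
        rw [if_neg (lt_irrefl l), if_pos rfl]
      · show (if l ≤ l then w1 l else _) = w1 l; rw [if_pos (le_refl l)]
      · show (if l + 1 ≤ l then _ else w2 (l + 1 - (l + 1))) = w2 0
        rw [if_neg (by omega)]
        congr 1
        omega
    · right; right
      refine ⟨hc, ?_, ?_, ?_, by omega⟩
      · show (if l < r1 then _ else if l = r1 then _ else sg2 (l - (r1+1))) = _
        rw [if_neg (by omega), if_neg (by omega)]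
      · show (if l ≤ r1 then _ else w2 (l - (r1 + 1))) = _; rw [if_neg (by omega)]
      · show (if l + 1 ≤ r1 then _ else w2 (l + 1 - (r1 + 1))) = w2 (l - (r1+1) + 1)
        rw [if_neg (by omega)]
        congr 1
        omega
  refine ⟨w, sg, ?_, ?_, ?_, ?_, hdesc⟩
  · intro l hl
    rcases hdesc l hl with ⟨hc, hs, hv, hv'⟩ | ⟨hc, hs, hv, hv'⟩ | ⟨hc, hs, hv, hv', hb⟩
    · rw [hs, hv, hv']; exact h1 l hc
    · rw [hs, hv, hv']; exact hmid
    · rw [hs, hv, hv']; exact h2 _ hb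
  · show (if 0 ≤ r1 then w1 0 else _) = w1 0; rw [if_pos (by omega)]
  · show (if r1 + 1 + r2 ≤ r1 then _ else w2 (r1 + 1 + r2 - (r1 + 1))) = w2 r2
    rw [if_neg (by omega)]
    congr 1
    omega
  · -- potential at the end
    have hp1 : ∀ l, l ≤ r1 → pot sg l = pot sg1 l := by
      intro l hle
      apply pot_congr
      intro n hn
      show (if n < r1 then sg1 n else _) = sg1 n
      rw [if_pos (by omega)]
    have hpmid : pot sg (r1 + 1) = xor (pot sg1 r1) d := by
      rw [pot_succ, hp1 r1 (le_refl _)]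
      congr 1
      show (if r1 < r1 then sg1 r1 else if r1 = r1 then d else _) = d
      rw [if_neg (lt_irrefl r1), if_pos rfl]
    have hp2 : ∀ l, pot sg (r1 + 1 + l) = xor (xor (pot sg1 r1) d) (pot sg2 l) := by
      intro l
      induction l with
      | zero => rw [hpmid, pot_zero, Bool.xor_false]
      | succ n ih =>
          rw [show r1 + 1 + (n + 1) = (r1 + 1 + n) + 1 from rfl, pot_succ, ih, pot_succ,
            ← Bool.xor_assoc]
          congr 1
          show (if r1 + 1 + n < r1 then _ else if r1 + 1 + n = r1 then _
            else sg2 (r1 + 1 + n - (r1 + 1))) = sg2 n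
          rw [if_neg (by omega), if_neg (by omega)]
          congr 1
          omega
    exact hp2 r2

/-- pairwise relations along a walk whose edge hyperplanes all contain `c`. -/
lemma walk_pairwise {r : ℕ} {w : ℕ → V} {sg : ℕ → Bool}
    {c : Submodule K (V → K)}
    (hker : ∀ l, l < r → c ≤ LinearMap.ker (eform K (sg l) (w l) (w (l + 1)))) :
    ∀ p q, p ≤ q → q ≤ r →
      c ≤ LinearMap.ker (eform K (xor (pot sg p) (pot sg q)) (w p) (w q)) := by
  intro p q hpq hqr
  induction q, hpq using Nat.le_induction with
  | base =>
      rw [Bool.xor_self, ker_eform_self_false]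
      exact le_top
  | succ n hn ih =>
      have h1 := ih (by omega)
      have h2 := hker n (by omega)
      have := le_trans (le_inf h1 h2) (ker_eform_comp (xor (pot sg p) (pot sg n)) (sg n)
        (w p) (w n) (w (n + 1)))
      rw [Bool.xor_assoc] at this
      rwa [pot_succ]
      
lemma walk_pairwise' {r : ℕ} {w : ℕ → V} {sg : ℕ → Bool}
    {c : Submodule K (V → K)}
    (hker : ∀ l, l < r → c ≤ LinearMap.ker (eform K (sg l) (w l) (w (l + 1))))
    (p q : ℕ) (hp : p ≤ r) (hq : q ≤ r) :
    c ≤ LinearMap.ker (eform K (xor (pot sg p) (pot sg q)) (w p) (w q)) := by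
  rcases le_total p q with h | h
  · exact walk_pairwise hker p q h hq
  · rw [ker_eform_symm, Bool.xor_comm]
    exact walk_pairwise hker q p h hp

end SSol
namespace SSol
set_option linter.unusedSectionVars false
set_option linter.unusedVariables false
set_option maxHeartbeats 2000000
variable {K : Type} [Field K] [CharZero K] {V : Type} [Fintype V]

lemma mem_ker_pr {i : V} {x : V → K} : x ∈ LinearMap.ker (pr K i) ↔ x i = 0 := by
  rw [LinearMap.mem_ker]; rfl

lemma xor_cancel_mid (a b c : Bool) : xor (xor a b) (xor b c) = xor a c := by
  cases a <;> cases b <;> cases c <;> rfl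

/-- The key step: if `H` is a hyperplane containing `a ⊓ m_k` and `b`, then any `x ∈ a`
lying in all hyperplanes containing `m_k` and `b` lies in `H`. -/
theorem key_step (G : SignedGraph V) (e : Fin (Fintype.card V) ≃ V)
    (hLE : ∀ i : Fin (Fintype.card V),
      (G.induce {v : V | ∃ j, j ≤ i ∧ e j = v}).LinkSimplicial ⟨e i, ⟨i, le_refl i, rfl⟩⟩)
    (k : ℕ) {a b H : Submodule K (V → K)}
    (haL : a ∈ interLattice K ((signedArr K G).image LinearMap.ker))
    (hba : b ≤ a)
    (hH : H ∈ (signedArr K G).image LinearMap.ker)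
    (haH : a ⊓ mflat K e k ≤ H) (hbH : b ≤ H) {x : V → K} (hxa : x ∈ a)
    (hx : ∀ H' ∈ (signedArr K G).image LinearMap.ker,
      mflat K e k ≤ H' → b ≤ H' → x ∈ H') : x ∈ H := by
  obtain ⟨B, hB, haB⟩ := (mem_interLattice_iff _ a).1 haL
  set m := mflat K e k with hm
  set B' := B ∪ Bflat K e k with hB'
  have hinfB' : B'.inf id = a ⊓ m := by
    rw [hB', Finset.inf_union, ← haB]; rfl
  have hclsB' : BCls K G B' := by
    intro h hh
    rcases Finset.mem_union.1 hh with hh | hh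
    · exact hyper_cases (hB hh)
    · obtain ⟨v, _, rfl⟩ := mem_Bflat.1 hh
      exact Or.inl ⟨v, rfl⟩
  have hedgeB : ∀ u w η, EdgeIn K G B' u w η → EdgeIn K G B u w η := by
    rintro u w η ⟨hadj, hker⟩
    rcases Finset.mem_union.1 hker with hk | hk
    · exact ⟨hadj, hk⟩
    · obtain ⟨v, _, heq⟩ := mem_Bflat.1 hk
      exact absurd heq (ker_eform_ne_ker_pr (EdgeAdj_ne hadj) η v)
  have hreachB : ∀ i j ρ, Reach K G B' i j ρ → a ≤ LinearMap.ker (eform K ρ i j) := by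
    intro i j ρ hR
    rw [haB]
    exact reach_sound (reach_mono hedgeB hR)
  have hzero : ∀ i, ZeroAt K G B' i → (a ≤ LinearMap.ker (pr K i)) ∨
      ∃ s ρ, vidx e s < k ∧ Reach K G B i s ρ ∧ a ≤ LinearMap.ker (eform K ρ i s) := by
    intro i hz
    rcases hz with hz | ⟨u, ρ, hru, hku⟩
    · left
      have := hreachB i i true hz
      rwa [ker_eform_self_true] at this
    · rcases Finset.mem_union.1 hku with hku | hku
      · left
        have h1 := hreachB i u ρ hru
        have h2 : a ≤ LinearMap.ker (pr K u) := by
          rw [haB]; exact Finset.inf_le hku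
        exact le_trans (le_inf h1 h2) (ker_pr_inf_le ρ i u)
      · obtain ⟨v, hv, heq⟩ := mem_Bflat.1 hku
        have huv : u = v := ker_pr_inj heq
        subst huv
        exact Or.inr ⟨u, ρ, hv, reach_mono hedgeB hru, hreachB i u ρ hru⟩
  rcases hyper_cases hH with ⟨i, rfl⟩ | ⟨i, j, d, hadj, rfl⟩
  · -- vertex hyperplane
    have hz : ZeroAt K G B' i := complete_vertex hclsB' (by rw [hinfB']; exact haH)
    rcases hzero i hz with hai | ⟨s, ρ, hsk, hRs, hrel⟩
    · exact hai hxa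
    · have hxi : x i = sgn K ρ * x s := mem_ker_eform.1 (hrel hxa)
      have hbs : b ≤ LinearMap.ker (pr K s) :=
        le_trans (le_inf (le_trans hba hrel) hbH) (ker_pr_inf_le' ρ i s)
      have hxs : x s = 0 := mem_ker_pr.1 <|
        hx _ (Finset.mem_image_of_mem _ (pr_mem_signedArr G s)) (mflat_le_ker_pr hsk) hbs
      rw [mem_ker_pr, hxi, hxs, mul_zero]
  · -- edge hyperplane
    have hij : i ≠ j := EdgeAdj_ne hadj
    have hBH' : B'.inf id ≤ LinearMap.ker (eform K d i j) := by rw [hinfB']; exact haH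
    rcases complete_edge hclsB' hij hBH' with hR | hzi
    · exact hreachB i j d hR hxa
    rcases complete_edge hclsB' (Ne.symm hij)
        (by rw [← ker_eform_symm]; exact hBH') with hRj | hzj
    · rw [ker_eform_symm]
      exact hreachB j i d hRj hxa
    rcases hzero i hzi with hai | ⟨s, ρ, hsk, hRi, hreli⟩
    · rcases hzero j hzj with haj | ⟨t, ρ', htk, hRj2, hrelj⟩
      · exact le_trans (le_inf hai haj) (ker_pr_le_eform d i j) hxa
      · have hxi0 : x i = 0 := mem_ker_pr.1 (hai hxa)
        have hbj : b ≤ LinearMap.ker (pr K j) :=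
          le_trans (le_inf hbH (le_trans hba hai)) (ker_pr_inf_le' d i j)
        have hbt : b ≤ LinearMap.ker (pr K t) :=
          le_trans (le_inf (le_trans hba hrelj) hbj) (ker_pr_inf_le' ρ' j t)
        have hxt : x t = 0 := mem_ker_pr.1 <|
          hx _ (Finset.mem_image_of_mem _ (pr_mem_signedArr G t)) (mflat_le_ker_pr htk) hbt
        have hxj : x j = sgn K ρ' * x t := mem_ker_eform.1 (hrelj hxa)
        rw [mem_ker_eform, hxi0, hxj, hxt]; ring
    · rcases hzero j hzj with haj | ⟨t, ρ', htk, hRj2, hrelj⟩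
      · have hxj0 : x j = 0 := mem_ker_pr.1 (haj hxa)
        have hbi : b ≤ LinearMap.ker (pr K i) :=
          le_trans (le_inf hbH (le_trans hba haj)) (ker_pr_inf_le d i j)
        have hbs : b ≤ LinearMap.ker (pr K s) :=
          le_trans (le_inf (le_trans hba hreli) hbi) (ker_pr_inf_le' ρ i s)
        have hxs : x s = 0 := mem_ker_pr.1 <|
          hx _ (Finset.mem_image_of_mem _ (pr_mem_signedArr G s)) (mflat_le_ker_pr hsk) hbs
        have hxi : x i = sgn K ρ * x s := mem_ker_eform.1 (hreli hxa)
        rw [mem_ker_eform, hxi, hxs, hxj0]; ring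
      · -- the genuine walk case
        obtain ⟨r1, w1, sg1, hw1, h10, h1r, h1p, h1k⟩ := reach_to_walk hRi.symm
        obtain ⟨r2, w2, sg2, hw2, h20, h2r, h2p, h2k⟩ := reach_to_walk hRj2
        have hmid : G.EdgeAdj d (w1 r1) (w2 0) := by rw [h1r, h20]; exact hadj
        obtain ⟨w, sg, hwW, hw0, hwr, hwp, hdesc⟩ := concat_walk G hw1 hw2 hmid
        set r := r1 + 1 + r2 with hrdef
        set c := a ⊓ LinearMap.ker (eform K d i j) with hcdef
        have hbc : b ≤ c := le_inf hba hbH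
        have hcker : ∀ l, l < r → c ≤ LinearMap.ker (eform K (sg l) (w l) (w (l + 1))) := by
          intro l hl
          rcases hdesc l hl with ⟨hc1, hs', hv, hv'⟩ | ⟨hc1, hs', hv, hv'⟩ |
            ⟨hc1, hs', hv, hv', hb2⟩
          · rw [hs', hv, hv']
            exact le_trans inf_le_left (by rw [haB]; exact Finset.inf_le (h1k l hc1))
          · rw [hs', hv, hv', h1r, h20]
            exact inf_le_right
          · rw [hs', hv, hv']
            exact le_trans inf_le_left (by rw [haB]; exact Finset.inf_le (h2k _ hb2))
        have hw0s : w 0 = s := by rw [hw0, h10]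
        have hwrt : w r = t := by rw [hwr, h2r]
        have hpotr : pot sg r = xor (xor ρ d) ρ' := by rw [hwp, h1p, h2p]
        have h0k : vidx e (w 0) < k := by rw [hw0s]; exact hsk
        have hrk : vidx e (w r) < k := by rw [hwrt]; exact htk
        have hCL := CLmain G e k hLE r w sg hwW h0k hrk
        have hxi : x i = sgn K ρ * x s := mem_ker_eform.1 (hreli hxa)
        have hxj : x j = sgn K ρ' * x t := mem_ker_eform.1 (hrelj hxa)
        rcases hCL with ⟨p, q, hp, hq, hvpq, hppq⟩ | ⟨p, q, hp, hq, hv0, hp0, hvr, hpr, rtg⟩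
        · -- unbalanced walk: both endpoints vanish
          have hxorT : xor (pot sg p) (pot sg q) = true := by
            cases hpp : pot sg p <;> cases hq2 : pot sg q <;> simp_all
          have h1 : c ≤ LinearMap.ker (eform K true (w q) (w q)) := by
            have := walk_pairwise' (K := K) hcker p q hp hq
            rwa [hxorT, hvpq] at this
          rw [ker_eform_self_true] at h1
          have h0' : c ≤ LinearMap.ker (pr K (w 0)) :=
            le_trans (le_inf (walk_pairwise' (K := K) hcker 0 q (by omega) hq) h1)
              (ker_pr_inf_le _ (w 0) (w q))
          have hr' : c ≤ LinearMap.ker (pr K (w r)) :=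
            le_trans (le_inf (walk_pairwise' (K := K) hcker r q (le_refl r) hq) h1)
              (ker_pr_inf_le _ (w r) (w q))
          have hbs : b ≤ LinearMap.ker (pr K s) := by
            rw [← hw0s]; exact le_trans hbc h0'
          have hbt : b ≤ LinearMap.ker (pr K t) := by
            rw [← hwrt]; exact le_trans hbc hr'
          have hxs : x s = 0 := mem_ker_pr.1 <|
            hx _ (Finset.mem_image_of_mem _ (pr_mem_signedArr G s)) (mflat_le_ker_pr hsk) hbs
          have hxt : x t = 0 := mem_ker_pr.1 <|
            hx _ (Finset.mem_image_of_mem _ (pr_mem_signedArr G t)) (mflat_le_ker_pr htk) hbt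
          rw [mem_ker_eform, hxi, hxj, hxs, hxt]; ring
        · -- chain of S_k-internal edges
          have hderiv : ∀ p' q', Relation.ReflTransGen (CLrel G e k r w sg) p' q' →
              x (w p') = sgn K (xor (pot sg p') (pot sg q')) * x (w q') := by
            intro p' q' hrtg
            induction hrtg with
            | refl => rw [Bool.xor_self, sgn_false, one_mul]
            | @tail cm qq hstep hrel ih =>
                obtain ⟨hb1, hb2, hkb, hkc, hadj2⟩ := hrel
                have hH' : x ∈ LinearMap.ker
                    (eform K (xor (pot sg cm) (pot sg qq)) (w cm) (w qq)) :=
                  hx _ (Finset.mem_image_of_mem _ (eform_mem_signedArr hadj2))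
                    (mflat_le_ker_eform hkb hkc)
                    (le_trans hbc (walk_pairwise' (K := K) hcker cm qq hb1 hb2))
                have hval := mem_ker_eform.1 hH'
                rw [ih, hval, ← mul_assoc, ← sgn_xor, xor_cancel_mid]
          have hxval := hderiv p q rtg
          rw [hv0, hvr, hp0, hpr, hw0s, hwrt, pot_zero, Bool.false_xor, hpotr] at hxval
          -- hxval : x s = sgn ((ρ ^^ d) ^^ ρ') * x t
          rw [mem_ker_eform, hxi, hxj, hxval, sgn_xor, sgn_xor]
          cases ρ <;> cases d <;> cases ρ' <;> simp [sgn] <;> ring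

end SSol
namespace SSol
set_option linter.unusedSectionVars false
set_option linter.unusedVariables false
set_option maxHeartbeats 2000000
variable {K : Type} [Field K] [CharZero K] {V : Type} [Fintype V]

lemma Bflat_subset (G : SignedGraph V) (e : Fin (Fintype.card V) ≃ V) (k : ℕ) :
    Bflat K e k ⊆ (signedArr K G).image LinearMap.ker := by
  intro h hh
  obtain ⟨v, _, rfl⟩ := mem_Bflat.1 hh
  exact Finset.mem_image_of_mem _ (pr_mem_signedArr G v)

lemma mflat_mem_interLattice (G : SignedGraph V) (e : Fin (Fintype.card V) ≃ V) (k : ℕ) :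
    mflat K e k ∈ interLattice K ((signedArr K G).image LinearMap.ker) :=
  inf_mem_interLattice _ (Bflat_subset G e k)

theorem mflat_modular (G : SignedGraph V) (e : Fin (Fintype.card V) ≃ V)
    (hLE : ∀ i : Fin (Fintype.card V),
      (G.induce {v : V | ∃ j, j ≤ i ∧ e j = v}).LinkSimplicial ⟨e i, ⟨i, le_refl i, rfl⟩⟩)
    (k : ℕ) :
    ModularIn K (interLattice K ((signedArr K G).image LinearMap.ker)) (mflat K e k) := by
  set HF := (signedArr K G).image LinearMap.ker with hHF
  set m := mflat K e k with hm
  refine ⟨mflat_mem_interLattice G e k, ?_⟩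
  intro a ha b hb hba
  apply le_antisymm
  · intro x hx
    rw [Submodule.mem_inf] at hx
    obtain ⟨hxa, hxm⟩ := hx
    rw [mem_latticeMeet_interLattice]
    intro H hH haH hbH
    refine key_step G e hLE k ha hba hH haH hbH hxa ?_
    intro H' hH' hm' hb'
    exact (mem_latticeMeet_interLattice HF).1 hxm H' hH' hm' hb'
  · apply le_inf
    · apply Finset.inf_le
      rw [Finset.mem_filter]
      exact ⟨ha, inf_le_left, hba⟩
    · apply Finset.le_inf
      intro z hz
      rw [Finset.mem_filter] at hz
      obtain ⟨hzL, hmz, hbz⟩ := hz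
      exact Finset.inf_le (Finset.mem_filter.2 ⟨hzL, le_trans inf_le_right hmz, hbz⟩)

end SSol
/-- **Theorem 2.14 (Zaslavsky).** If a signed graph `G` has a link elimination ordering,
then `A(G)` is supersolvable. -/
theorem supersolvable_of_link_elim (K : Type) [Field K] [CharZero K] {V : Type} [Fintype V]
    (G : SignedGraph V) (h : G.HasLinkElimOrdering) :
    ArrSupersolvable K (signedArr K G) := by
  classical
  obtain ⟨e, hLE⟩ := h
  have hVr : Module.finrank K (V → K) = Fintype.card V := by
    rw [Module.finrank_pi]
  refine ⟨(fun k => SSol.mflat K e k) '' Set.Iic (Fintype.card V), ?_, ?_, ?_, ?_⟩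
  · rintro _ ⟨k, hk, rfl⟩
    exact SSol.mflat_mem_interLattice G e k
  · rintro _ ⟨k1, hk1, rfl⟩ _ ⟨k2, hk2, rfl⟩ hne
    rcases le_total k1 k2 with hc | hc
    · exact Or.inr (SSol.mflat_antitone hc)
    · exact Or.inl (SSol.mflat_antitone hc)
  · intro C' hC'sub hC'chain hCC'
    refine Set.Subset.antisymm ?_ hCC'
    intro X hX
    have hfr : Module.finrank K X ≤ Fintype.card V := by
      have := Submodule.finrank_le X
      omega
    set k := Fintype.card V - Module.finrank K X with hkdef
    have hk : k ≤ Fintype.card V := by omega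
    have hmem : SSol.mflat K e k ∈ C' := hCC' ⟨k, hk, rfl⟩
    have hfrm : Module.finrank K (SSol.mflat K e k) = Module.finrank K X := by
      rw [SSol.finrank_mflat hk]
      omega
    have htot := hC'chain.total hX hmem
    have hXeq : X = SSol.mflat K e k := by
      rcases htot with hle | hle
      · exact Submodule.eq_of_le_of_finrank_le hle (le_of_eq hfrm)
      · exact (Submodule.eq_of_le_of_finrank_le hle (le_of_eq hfrm.symm)).symm
    rw [hXeq]
    exact ⟨k, hk, rfl⟩
  · rintro _ ⟨k, hk, rfl⟩
    exact SSol.mflat_modular G e hLE k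
end
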